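/- arXiv:1401.7419 — 7 statements merged into one kernel-verified Lean document; each statement's English description precedes it below -/
import Mathlib

section
/- Let φ and ψ be non-constant univariate real polynomials. Then the bivariate polynomial h(u,v) = φ(u) + ψ(v) is indecomposable over ℝ; that is, h cannot be written as r(h₀(u,v)) for a univariate real polynomial r of degree at least 2 and a bivariate real polynomial h₀. -/
open MvPolynomial


lemma degOf0_mul {n : ℕ} (p q : MvPolynomial (Fin (n+1)) ℝ) (hp : p ≠ 0) (hq : q ≠ 0) :
    degreeOf 0 (p * q) = degreeOf 0 p + degreeOf 0 q := by
  have hp' : finSuccEquiv ℝ n p ≠ 0 :=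
    fun h => hp ((finSuccEquiv ℝ n).injective (by simpa using h))
  have hq' : finSuccEquiv ℝ n q ≠ 0 :=
    fun h => hq ((finSuccEquiv ℝ n).injective (by simpa using h))
  rw [← natDegree_finSuccEquiv, ← natDegree_finSuccEquiv, ← natDegree_finSuccEquiv,
    map_mul, Polynomial.natDegree_mul hp' hq']

lemma degOf_mul (i : Fin 2) (p q : MvPolynomial (Fin 2) ℝ) (hp : p ≠ 0) (hq : q ≠ 0) :
    degreeOf i (p * q) = degreeOf i p + degreeOf i q := by
  set e : Fin 2 → Fin 2 := ⇑(Equiv.swap 0 i) with he'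
  have he : Function.Injective e := (Equiv.swap 0 i).injective
  have h0 : e i = 0 := Equiv.swap_apply_right 0 i
  have hrp : rename e p ≠ 0 :=
    fun h => hp (rename_injective e he (by simpa using h))
  have hrq : rename e q ≠ 0 :=
    fun h => hq (rename_injective e he (by simpa using h))
  have h2 := degOf0_mul (n := 1) (rename e p) (rename e q) hrp hrq
  calc degreeOf i (p * q) = degreeOf (e i) (rename e (p * q)) :=
        (degreeOf_rename_of_injective he i).symm
    _ = degreeOf 0 (rename e p * rename e q) := by rw [h0, map_mul]
    _ = degreeOf (e i) (rename e p) + degreeOf (e i) (rename e q) := by rw [h0, h2]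
    _ = degreeOf i p + degreeOf i q := by
        rw [degreeOf_rename_of_injective he i, degreeOf_rename_of_injective he i]

lemma degOf_aeval_X {i j : Fin 2} (hij : j ≠ i) (q : Polynomial ℝ) :
    degreeOf j (Polynomial.aeval (X i : MvPolynomial (Fin 2) ℝ) q) = 0 := by
  refine Nat.le_zero.1 ?_
  induction q using Polynomial.induction_on' with
  | add p q hp hq =>
      refine le_trans ?_ (max_le hp hq)
      simpa using degreeOf_add_le j _ _
  | monomial n a =>
      rcases eq_or_ne a 0 with rfl | ha
      · simp
      · have h1 : Polynomial.aeval (X i : MvPolynomial (Fin 2) ℝ) (Polynomial.monomial n a)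
            = monomial (Finsupp.single i n) a := by
          rw [Polynomial.aeval_monomial, algebraMap_eq, X_pow_eq_monomial,
            C_mul_monomial, mul_one]
        rw [h1, degreeOf_monomial_eq _ _ ha, Finsupp.single_apply, if_neg (fun h => hij h.symm)]

lemma range_eval_infinite (p : Polynomial ℝ) (hp : 0 < p.natDegree) :
    (Set.range fun u : ℝ => p.eval u).Infinite := by
  intro hfin
  have hcover : (Set.univ : Set ℝ) ⊆
      ⋃ v ∈ Set.range (fun u : ℝ => p.eval u), {u : ℝ | (p - Polynomial.C v).IsRoot u} := by
    intro u _
    simp only [Set.mem_iUnion, Set.mem_setOf_eq]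
    exact ⟨p.eval u, Set.mem_range_self u, by simp [Polynomial.IsRoot]⟩
  have hfinU : (Set.univ : Set ℝ).Finite := by
    refine Set.Finite.subset (Set.Finite.biUnion hfin fun v _ => ?_) hcover
    refine Polynomial.finite_setOf_isRoot fun h => ?_
    have : p = Polynomial.C v := by rwa [sub_eq_zero] at h
    rw [this, Polynomial.natDegree_C] at hp; exact lt_irrefl 0 hp
  exact Set.infinite_univ hfinU

/-- If `φ` and `ψ` are non-constant univariate real polynomials, then the bivariate polynomial
`h(u,v) = φ(u) + ψ(v)` is indecomposable over `ℝ`: it cannot be written as `r(h₀(u,v))` with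
`r` a univariate real polynomial of degree at least 2 and `h₀` a bivariate real polynomial. -/
theorem add_form_indecomposable (φ ψ : Polynomial ℝ)
    (hφ : 0 < φ.natDegree) (hψ : 0 < ψ.natDegree) :
    ¬ ∃ (r : Polynomial ℝ) (h₀ : MvPolynomial (Fin 2) ℝ),
        2 ≤ r.natDegree ∧
        Polynomial.aeval (X 0 : MvPolynomial (Fin 2) ℝ) φ +
          Polynomial.aeval (X 1 : MvPolynomial (Fin 2) ℝ) ψ = Polynomial.aeval h₀ r := by
  rintro ⟨r, h₀, hr, hEq⟩
  -- nonvanishing of derivatives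
  have hφ' : φ.derivative ≠ 0 := fun h => by
    rw [Polynomial.natDegree_eq_zero_of_derivative_eq_zero h] at hφ; exact lt_irrefl 0 hφ
  have hψ' : ψ.derivative ≠ 0 := fun h => by
    rw [Polynomial.natDegree_eq_zero_of_derivative_eq_zero h] at hψ; exact lt_irrefl 0 hψ
  -- chain rule in each variable
  have D0 : Polynomial.aeval (X 0 : MvPolynomial (Fin 2) ℝ) φ.derivative
      = Polynomial.aeval h₀ r.derivative * pderiv 0 h₀ := by
    have h := congrArg (⇑(pderiv (0 : Fin 2))) hEq
    simpa [Derivation.map_aeval, pderiv_X_self,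
      pderiv_X_of_ne (show (1 : Fin 2) ≠ 0 by decide), smul_eq_mul] using h
  have D1 : Polynomial.aeval (X 1 : MvPolynomial (Fin 2) ℝ) ψ.derivative
      = Polynomial.aeval h₀ r.derivative * pderiv 1 h₀ := by
    have h := congrArg (⇑(pderiv (1 : Fin 2))) hEq
    simpa [Derivation.map_aeval, pderiv_X_self,
      pderiv_X_of_ne (show (0 : Fin 2) ≠ 1 by decide), smul_eq_mul] using h
  -- aeval (X i) is injective, so the LHSs are nonzero
  have hinj : ∀ (i : Fin 2) (q : Polynomial ℝ),
      Polynomial.aeval (X i : MvPolynomial (Fin 2) ℝ) q = 0 → q = 0 := by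
    intro i q h
    have h3 := congrArg (⇑(MvPolynomial.aeval (fun _ : Fin 2 => (Polynomial.X : Polynomial ℝ)))) h
    rwa [map_zero, ← Polynomial.aeval_algHom_apply, MvPolynomial.aeval_X,
      Polynomial.aeval_X_left_apply] at h3
  have hA : Polynomial.aeval (X 0 : MvPolynomial (Fin 2) ℝ) φ.derivative ≠ 0 :=
    fun h => hφ' (hinj 0 _ h)
  have hB : Polynomial.aeval (X 1 : MvPolynomial (Fin 2) ℝ) ψ.derivative ≠ 0 :=
    fun h => hψ' (hinj 1 _ h)
  set g : MvPolynomial (Fin 2) ℝ := Polynomial.aeval h₀ r.derivative with hgdef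
  have hg : g ≠ 0 := fun h => hA (by rw [D0, h, zero_mul])
  have hp0 : pderiv 0 h₀ ≠ 0 := fun h => hA (by rw [D0, h, mul_zero])
  have hp1 : pderiv 1 h₀ ≠ 0 := fun h => hB (by rw [D1, h, mul_zero])
  -- g has degree 0 in each variable
  have hdeg1 : degreeOf 1 g = 0 := by
    have h1 : degreeOf 1 (g * pderiv 0 h₀) = 0 := by
      rw [← D0]; exact degOf_aeval_X (by decide) _
    have h2 := degOf_mul 1 g (pderiv 0 h₀) hg hp0
    omega
  have hdeg0 : degreeOf 0 g = 0 := by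
    have h1 : degreeOf 0 (g * pderiv 1 h₀) = 0 := by
      rw [← D1]; exact degOf_aeval_X (by decide) _
    have h2 := degOf_mul 0 g (pderiv 1 h₀) hg hp1
    omega
  -- hence g is a constant
  set c : ℝ := g.coeff 0 with hcdef
  have hgC : g = C c := by
    ext m
    rw [coeff_C]
    split_ifs with h
    · rw [← h]
    · by_contra hc
      have hm : m ∈ g.support := mem_support_iff.2 hc
      have h1 : m 0 = 0 := Nat.le_zero.1 ((monomial_le_degreeOf 0 hm).trans hdeg0.le)
      have h2 : m 1 = 0 := Nat.le_zero.1 ((monomial_le_degreeOf 1 hm).trans hdeg1.le)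
      have hm0 : m = 0 := Finsupp.ext fun i => by fin_cases i <;> simpa using ‹_›
      exact h hm0.symm
  -- the evaluation of h₀
  set F : (Fin 2 → ℝ) → ℝ := fun x => MvPolynomial.aeval x h₀ with hFdef
  have hroot : ∀ x : Fin 2 → ℝ, (r.derivative - Polynomial.C c).IsRoot (F x) := by
    intro x
    have h := congrArg (⇑(MvPolynomial.aeval x)) hgC
    rw [hgdef, ← Polynomial.aeval_algHom_apply, MvPolynomial.algHom_C] at h
    have h' : Polynomial.eval (F x) r.derivative = c := h
    simp [Polynomial.IsRoot, h']
  have hmain : ∀ x : Fin 2 → ℝ,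
      φ.eval (x 0) + ψ.eval (x 1) = Polynomial.eval (F x) r := by
    intro x
    have h := congrArg (⇑(MvPolynomial.aeval x)) hEq
    rw [map_add, ← Polynomial.aeval_algHom_apply, ← Polynomial.aeval_algHom_apply,
      ← Polynomial.aeval_algHom_apply, MvPolynomial.aeval_X, MvPolynomial.aeval_X] at h
    exact h
  -- the range of F is infinite
  have hFinf : (Set.range F).Infinite := by
    intro hfin
    have hT : (Set.range fun u : ℝ => (φ + Polynomial.C (ψ.eval 0)).eval u).Infinite := by
      refine range_eval_infinite _ ?_
      rwa [Polynomial.natDegree_add_C]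
    refine hT ?_
    have hsub : (Set.range fun u : ℝ => (φ + Polynomial.C (ψ.eval 0)).eval u)
        ⊆ (fun t => Polynomial.eval t r) '' Set.range F := by
      rintro _ ⟨u, rfl⟩
      refine ⟨F (fun i => if i = 0 then u else 0), Set.mem_range_self _, ?_⟩
      have := hmain (fun i => if i = 0 then u else 0)
      simp only [Polynomial.eval_add, Polynomial.eval_C]
      simpa using this.symm
    exact Set.Finite.subset (Set.Finite.image _ hfin) hsub
  -- hence r' = C c, contradiction with deg r ≥ 2
  have hrc : r.derivative = Polynomial.C c := by
    have h0 : r.derivative - Polynomial.C c = 0 := by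
      refine Polynomial.eq_zero_of_infinite_isRoot _ (Set.Infinite.mono ?_ hFinf)
      rintro _ ⟨x, rfl⟩
      exact hroot x
    linear_combination h0
  have hle : r.natDegree ≤ 1 := by
    have hd : Polynomial.derivative (r - Polynomial.C c * Polynomial.X) = 0 := by
      simp [hrc]
    have h0 : (r - Polynomial.C c * Polynomial.X).natDegree = 0 :=
      Polynomial.natDegree_eq_zero_of_derivative_eq_zero hd
    calc r.natDegree = ((r - Polynomial.C c * Polynomial.X) + Polynomial.C c * Polynomial.X).natDegree := by
          ring_nf
      _ ≤ max (r - Polynomial.C c * Polynomial.X).natDegree (Polynomial.C c * Polynomial.X).natDegree :=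
          Polynomial.natDegree_add_le _ _
      _ ≤ 1 := by
          refine max_le (by omega) ?_
          exact (Polynomial.natDegree_C_mul_le _ _).trans (by simp)
  omega
end

section
/- Let h₀ be a bivariate real polynomial and r a univariate real polynomial such that r(h₀(u,v)) = φ(u)·ψ(v) identically, for some univariate real polynomials φ, ψ, with r non-constant. Then h₀ is of the form h₀(u,v) = φ₁(u)·ψ₁(v) + z for some univariate real polynomials φ₁, ψ₁ and a real constant z. -/
open MvPolynomial


noncomputable def EE (x y : ℝ) : Polynomial (Polynomial ℂ) →+* ℂ :=
  Polynomial.eval₂RingHom (Polynomial.evalRingHom (x:ℂ)) (y:ℂ)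

lemma halgT (w : ℂ) : algebraMap ℂ (Polynomial (Polynomial ℂ)) w
    = Polynomial.C (Polynomial.C w) := by
  rw [IsScalarTower.algebraMap_apply ℂ (Polynomial ℂ) (Polynomial (Polynomial ℂ))]
  simp [Polynomial.algebraMap_eq]

lemma expandT (p : Polynomial ℂ) (t : Polynomial (Polynomial ℂ)) :
    Polynomial.aeval t p = algebraMap ℂ _ p.leadingCoeff *
      (p.roots.map (fun w => t - algebraMap ℂ _ w)).prod := by
  by_cases hp : p = 0
  · simp [hp]
  conv_lhs => rw [Polynomial.Splits.eq_prod_roots (IsAlgClosed.splits p)]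
  rw [map_mul, map_multiset_prod, Multiset.map_map]
  congr 1
  · exact Polynomial.aeval_C _ _
  · congr 1
    apply Multiset.map_congr rfl
    intro w _
    simp

lemma peel {T : Type*} [CommRing T] [IsDomain T] {ι : Type*}
    (f : ι → T) (hf : ∀ i, Prime (f i)) :
    ∀ (m : Multiset ι) (d c : T), d ∣ c * (m.map f).prod →
      ∃ s ≤ m, ∃ d', d = d' * (s.map f).prod ∧ d' ∣ c := by
  intro m
  induction m using Multiset.induction_on with
  | empty => intro d c h; exact ⟨0, le_refl _, d, by simp, by simpa using h⟩
  | cons i m ih =>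
    intro d c h
    rw [Multiset.map_cons, Multiset.prod_cons] at h
    by_cases hp : f i ∣ d
    · obtain ⟨d', rfl⟩ := hp
      have hcanc : d' ∣ c * (m.map f).prod := by
        have h2 : f i * d' ∣ f i * (c * (m.map f).prod) := by
          have h3 : c * (f i * (m.map f).prod) = f i * (c * (m.map f).prod) := by ring
          rwa [h3] at h
        exact (mul_dvd_mul_iff_left (hf i).ne_zero).mp h2
      obtain ⟨s, hs, d'', hd'', hdvd⟩ := ih d' c hcanc
      refine ⟨i ::ₘ s, Multiset.cons_le_cons _ hs, d'', ?_, hdvd⟩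
      rw [Multiset.map_cons, Multiset.prod_cons, hd'']; ring
    · obtain ⟨e, he⟩ := h
      have hfi : f i ∣ d * e := ⟨c * (m.map f).prod, by rw [← he]; ring⟩
      rcases (hf i).2.2 _ _ hfi with h1 | h2
      · exact absurd h1 hp
      · obtain ⟨e', rfl⟩ := h2
        have hde : d ∣ c * (m.map f).prod := by
          refine ⟨e', mul_left_cancel₀ (hf i).ne_zero ?_⟩
          have h3 : c * (f i * (m.map f).prod) = f i * (c * (m.map f).prod) := by ring
          rw [← h3, he]; ring
        obtain ⟨s, hs, d'', hd'', hdvd⟩ := ih d c hde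
        exact ⟨s, le_trans hs (Multiset.le_cons_self _ _), d'', hd'', hdvd⟩

lemma complex_values (h₀ : MvPolynomial (Fin 2) ℝ) (r φ ψ : Polynomial ℝ)
    (hr : 0 < r.natDegree)
    (heq : Polynomial.aeval h₀ r =
      Polynomial.aeval (X 0 : MvPolynomial (Fin 2) ℝ) φ *
        Polynomial.aeval (X 1 : MvPolynomial (Fin 2) ℝ) ψ) :
    ∃ (f g : ℝ → ℂ) (z₁ : ℂ), ∀ x y : ℝ,
      algebraMap ℝ ℂ (eval ![x, y] h₀) = f x * g y + z₁ := by
  set T := Polynomial (Polynomial ℂ) with hT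
  set Θ : MvPolynomial (Fin 2) ℝ →ₐ[ℝ] T :=
    MvPolynomial.aeval ![Polynomial.C Polynomial.X, Polynomial.X] with hΘ
  set H : T := Θ h₀ with hH
  have keyH : ∀ x y : ℝ, EE x y H = algebraMap ℝ ℂ (eval ![x,y] h₀) := by
    intro x y
    have h : (EE x y).comp (Θ.toRingHom)
        = (algebraMap ℝ ℂ).comp (MvPolynomial.eval ![x,y] : MvPolynomial (Fin 2) ℝ →+* ℝ) := by
      apply MvPolynomial.ringHom_ext
      · intro a
        simp [hΘ, EE, IsScalarTower.algebraMap_apply ℝ ℂ (Polynomial (Polynomial ℂ)),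
          IsScalarTower.algebraMap_apply ℂ (Polynomial ℂ) (Polynomial (Polynomial ℂ)),
          Polynomial.algebraMap_eq, T]
      · intro i; fin_cases i <;> simp [hΘ, EE]
    exact RingHom.congr_fun h h₀
  have heqT : Polynomial.aeval H r =
      Polynomial.aeval ((Polynomial.C Polynomial.X : T)) φ
        * Polynomial.aeval (Polynomial.X : T) ψ := by
    have e0 : (Polynomial.C Polynomial.X : T) = Θ (X 0) := by simp [hΘ]
    have e1 : (Polynomial.X : T) = Θ (X 1) := by simp [hΘ]
    rw [hH, e0, e1, Polynomial.aeval_algHom_apply, Polynomial.aeval_algHom_apply,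
      Polynomial.aeval_algHom_apply, ← map_mul, heq]
  set rC := r.map (algebraMap ℝ ℂ) with hrCdef
  set φC := φ.map (algebraMap ℝ ℂ) with hφCdef
  set ψC := ψ.map (algebraMap ℝ ℂ) with hψCdef
  have hrne : r ≠ 0 := fun h => by simp [h] at hr
  have hrC0 : rC ≠ 0 := by
    rw [hrCdef, Ne, Polynomial.map_eq_zero_iff (algebraMap ℝ ℂ).injective]
    exact hrne
  have hHr : Polynomial.aeval H rC = Polynomial.aeval H r :=
    Polynomial.aeval_map_algebraMap (A := ℂ) H r
  have hφ : Polynomial.aeval ((Polynomial.C Polynomial.X : T)) φC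
      = Polynomial.aeval ((Polynomial.C Polynomial.X : T)) φ :=
    Polynomial.aeval_map_algebraMap (A := ℂ) _ φ
  have hψ : Polynomial.aeval ((Polynomial.X : T)) ψC
      = Polynomial.aeval ((Polynomial.X : T)) ψ :=
    Polynomial.aeval_map_algebraMap (A := ℂ) _ ψ
  by_cases hz : Polynomial.aeval H r = 0
  · -- degenerate : H is a constant
    rw [← hHr, expandT] at hz
    have hlc : algebraMap ℂ T rC.leadingCoeff ≠ 0 := by
      intro h
      exact (Polynomial.leadingCoeff_ne_zero.mpr hrC0)
        ((algebraMap ℂ T).injective (by simpa using h))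
    have hprod : ((rC.roots.map (fun w => H - algebraMap ℂ T w)).prod) = 0 := by
      rcases mul_eq_zero.mp hz with h | h
      · exact absurd h hlc
      · exact h
    have h0mem := Multiset.prod_eq_zero_iff.mp hprod
    obtain ⟨w, _, hw⟩ := Multiset.mem_map.mp h0mem
    have hHw : H = algebraMap ℂ T w := sub_eq_zero.mp hw
    refine ⟨0, 0, w, fun x y => ?_⟩
    rw [← keyH x y, hHw, halgT]
    simp [EE]
  · -- main case
    have hφC0 : φC ≠ 0 := by
      intro h
      rw [h] at hφ
      rw [← hHr, ← hφ] at heqT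
      simp at heqT
      exact hz (hHr ▸ (by rw [heqT] : Polynomial.aeval H rC = 0))
    have hψC0 : ψC ≠ 0 := by
      intro h
      rw [h] at hψ
      rw [← hHr, ← hψ] at heqT
      simp at heqT
      exact hz (hHr ▸ (by rw [heqT] : Polynomial.aeval H rC = 0))
    have hdeg : 0 < rC.degree := by
      rw [Polynomial.natDegree_pos_iff_degree_pos] at hr
      rwa [hrCdef, Polynomial.degree_map_eq_of_injective (algebraMap ℝ ℂ).injective]
    obtain ⟨z₁, hz₁⟩ := Complex.exists_root hdeg
    have hdvd1 : (Polynomial.X - Polynomial.C z₁) ∣ rC := Polynomial.dvd_iff_isRoot.mpr hz₁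
    set d : T := H - algebraMap ℂ T z₁ with hd
    have hdDvd : d ∣ Polynomial.aeval H rC := by
      have h5 := map_dvd (Polynomial.aeval H : Polynomial ℂ →ₐ[ℂ] T) hdvd1
      simpa [hd, map_sub] using h5
    set fu : ℂ → T := fun α => Polynomial.C (Polynomial.X - Polynomial.C α) with hfu
    set fv : ℂ → T := fun β => Polynomial.X - Polynomial.C (Polynomial.C β) with hfv
    set m₁ := φC.roots with hm₁def
    set m₂ := ψC.roots with hm₂def
    set a := φC.leadingCoeff with hadef
    set b := ψC.leadingCoeff with hbdef
    have hab : a * b ≠ 0 := mul_ne_zero (Polynomial.leadingCoeff_ne_zero.mpr hφC0)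
      (Polynomial.leadingCoeff_ne_zero.mpr hψC0)
    have hu : IsUnit (algebraMap ℂ T (a*b)) := hab.isUnit.map (algebraMap ℂ T)
    have hRHS : Polynomial.aeval H rC
        = (algebraMap ℂ T (a*b) * (m₂.map fv).prod) * (m₁.map fu).prod := by
      rw [hHr, heqT, ← hφ, ← hψ, expandT φC _, expandT ψC _, map_mul (algebraMap ℂ T)]
      have hh1 : (φC.roots.map (fun w => (Polynomial.C Polynomial.X : T) - algebraMap ℂ T w)).prod
          = (m₁.map fu).prod := by
        congr 1
        apply Multiset.map_congr rfl
        intro α _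
        rw [halgT, hfu]
        exact (Polynomial.C_sub).symm
      have hh2 : (ψC.roots.map (fun w => (Polynomial.X : T) - algebraMap ℂ T w)).prod
          = (m₂.map fv).prod := by
        congr 1
      rw [hh1, hh2]
      ring
    have hmain : d ∣ (algebraMap ℂ T (a*b) * (m₂.map fv).prod) * (m₁.map fu).prod :=
      hRHS ▸ hdDvd
    have hfuP : ∀ α : ℂ, Prime (fu α) := fun α =>
      Polynomial.prime_C_iff.mpr (Polynomial.prime_X_sub_C α)
    have hfvP : ∀ β : ℂ, Prime (fv β) := fun β => Polynomial.prime_X_sub_C (Polynomial.C β)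
    obtain ⟨s₁, hs₁, d₁, hd₁, hdvd₁⟩ := peel fu hfuP m₁ d _ hmain
    obtain ⟨s₂, hs₂, d₂, hd₂, hdvd₂⟩ := peel fv hfvP m₂ d₁ _ hdvd₁
    have hud₂ : IsUnit d₂ := isUnit_of_dvd_unit hdvd₂ hu
    obtain ⟨p', hp'u, hp'⟩ := Polynomial.isUnit_iff.mp hud₂
    obtain ⟨c, hcu, hc⟩ := Polynomial.isUnit_iff.mp hp'u
    refine ⟨fun x => c * ((s₁.map (fun α => (x:ℂ) - α)).prod),
      fun y => ((s₂.map (fun β => (y:ℂ) - β)).prod), z₁, fun x y => ?_⟩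
    rw [← keyH x y]
    have hHform : H = d₂ * (s₂.map fv).prod * (s₁.map fu).prod + algebraMap ℂ T z₁ := by
      have h6 : H = d + algebraMap ℂ T z₁ := by rw [hd]; ring
      rw [h6, hd₁, hd₂]
    rw [hHform, map_add, map_mul, map_mul, ← hp', ← hc]
    have e1 : EE x y (Polynomial.C (Polynomial.C c)) = c := by simp [EE]
    have e2 : EE x y ((s₁.map fu).prod) = (s₁.map (fun α => (x:ℂ) - α)).prod := by
      rw [map_multiset_prod, Multiset.map_map]
      congr 1
      apply Multiset.map_congr rfl
      intro α _
      simp [EE, hfu]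
    have e3 : EE x y ((s₂.map fv).prod) = (s₂.map (fun β => (y:ℂ) - β)).prod := by
      rw [map_multiset_prod, Multiset.map_map]
      congr 1
      apply Multiset.map_congr rfl
      intro β _
      simp only [Function.comp_apply, hfv]
      rw [map_sub]
      simp [EE]
    have e4 : EE x y (algebraMap ℂ T z₁) = z₁ := by rw [halgT]; simp [EE]
    rw [e1, e2, e3, e4]
    ring


lemma evalP (q : Polynomial ℝ) (v : Fin 2 → ℝ) (i : Fin 2) :
    MvPolynomial.eval v (Polynomial.aeval (MvPolynomial.X i) q) = q.eval (v i) := by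
  rw [Polynomial.aeval_def,
    show ((MvPolynomial.eval v) (Polynomial.eval₂ (algebraMap ℝ (MvPolynomial (Fin 2) ℝ)) (X i) q)) =
    ((MvPolynomial.eval v : MvPolynomial (Fin 2) ℝ →+* ℝ) (Polynomial.eval₂ (algebraMap ℝ (MvPolynomial (Fin 2) ℝ)) (X i) q)) from rfl,
    Polynomial.hom_eval₂]
  simp
  congr 1
  apply RingHom.ext; intro a; simp

lemma evalA1 (p : MvPolynomial (Fin 2) ℝ) (b x : ℝ) :
    (MvPolynomial.aeval ![Polynomial.X, Polynomial.C b] p).eval x = eval ![x, b] p := by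
  have h : (Polynomial.evalRingHom x).comp
      ((MvPolynomial.aeval ![Polynomial.X, Polynomial.C b]).toRingHom)
      = (MvPolynomial.eval ![x,b] : MvPolynomial (Fin 2) ℝ →+* ℝ) := by
    apply MvPolynomial.ringHom_ext
    · intro a; simp
    · intro i; fin_cases i <;> simp
  exact RingHom.congr_fun h p

lemma evalA2 (p : MvPolynomial (Fin 2) ℝ) (a y : ℝ) :
    (MvPolynomial.aeval ![Polynomial.C a, Polynomial.X] p).eval y = eval ![a, y] p := by
  have h : (Polynomial.evalRingHom y).comp
      ((MvPolynomial.aeval ![Polynomial.C a, Polynomial.X]).toRingHom)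
      = (MvPolynomial.eval ![a,y] : MvPolynomial (Fin 2) ℝ →+* ℝ) := by
    apply MvPolynomial.ringHom_ext
    · intro c; simp
    · intro i; fin_cases i <;> simp
  exact RingHom.congr_fun h p

/-- If `r(h₀(u,v)) = φ(u)·ψ(v)` identically, with `r` a non-constant univariate real polynomial,
then `h₀(u,v) = φ₁(u)·ψ₁(v) + z` for some univariate real polynomials `φ₁, ψ₁` and `z ∈ ℝ`. -/
theorem decomposable_mul_form (h₀ : MvPolynomial (Fin 2) ℝ) (r φ ψ : Polynomial ℝ)
    (hr : 0 < r.natDegree)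
    (heq : Polynomial.aeval h₀ r =
      Polynomial.aeval (X 0 : MvPolynomial (Fin 2) ℝ) φ *
        Polynomial.aeval (X 1 : MvPolynomial (Fin 2) ℝ) ψ) :
    ∃ (φ₁ ψ₁ : Polynomial ℝ) (z : ℝ),
      h₀ = Polynomial.aeval (X 0 : MvPolynomial (Fin 2) ℝ) φ₁ *
          Polynomial.aeval (X 1 : MvPolynomial (Fin 2) ℝ) ψ₁ + C z := by
  obtain ⟨f, g, z₁, hval⟩ := complex_values h₀ r φ ψ hr heq
  by_cases hxconst : ∀ y x₁ x₂ : ℝ, eval ![x₁, y] h₀ = eval ![x₂, y] h₀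
  · refine ⟨1, MvPolynomial.aeval ![Polynomial.C 0, Polynomial.X] h₀, 0, ?_⟩
    apply MvPolynomial.funext
    intro v
    have hv : v = ![v 0, v 1] := by funext i; fin_cases i <;> rfl
    rw [map_add, map_mul, evalP, evalP]
    simp only [map_one, Polynomial.eval_one, one_mul, MvPolynomial.eval_C, add_zero, evalA2]
    conv_lhs => rw [hv]
    exact hxconst (v 1) (v 0) 0
  by_cases hyconst : ∀ x y₁ y₂ : ℝ, eval ![x, y₁] h₀ = eval ![x, y₂] h₀
  · refine ⟨MvPolynomial.aeval ![Polynomial.X, Polynomial.C 0] h₀, 1, 0, ?_⟩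
    apply MvPolynomial.funext
    intro v
    have hv : v = ![v 0, v 1] := by funext i; fin_cases i <;> rfl
    rw [map_add, map_mul, evalP, evalP]
    simp only [map_one, Polynomial.eval_one, mul_one, MvPolynomial.eval_C, add_zero, evalA1]
    conv_lhs => rw [hv]
    exact hyconst (v 0) (v 1) 0
  push_neg at hxconst hyconst
  obtain ⟨y₀, x₁, x₂, hxy⟩ := hxconst
  obtain ⟨x₀, y₁, y₂, hyy⟩ := hyconst
  set cj := (starRingEnd ℂ) with hcj
  have hconj : ∀ x y : ℝ, f x * g y + z₁ = cj (f x) * cj (g y) + cj z₁ := by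
    intro x y
    have h1 := hval x y
    have h2 := congrArg cj h1
    rw [map_add, map_mul] at h2
    rw [show cj (algebraMap ℝ ℂ (eval ![x,y] h₀)) = algebraMap ℝ ℂ (eval ![x,y] h₀) from
      Complex.conj_ofReal _] at h2
    rw [← h1]
    exact h2
  have hfne : f x₁ ≠ f x₂ := by
    intro hEq
    apply hxy
    apply (algebraMap ℝ ℂ).injective
    rw [hval, hval, hEq]
  have hgy₀ : g y₀ ≠ 0 := by
    intro hEq
    apply hxy
    apply (algebraMap ℝ ℂ).injective
    rw [hval, hval, hEq]
    ring
  have hgne : g y₁ ≠ g y₂ := by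
    intro hEq
    apply hyy
    apply (algebraMap ℝ ℂ).injective
    rw [hval, hval, hEq]
  have hfx₀ : f x₀ ≠ 0 := by
    intro hEq
    apply hyy
    apply (algebraMap ℝ ℂ).injective
    rw [hval, hval, hEq]
    ring
  set A := f x₁ - f x₂ with hA
  set B := g y₁ - g y₂ with hB
  have hA0 : A ≠ 0 := sub_ne_zero.mpr hfne
  have hB0 : B ≠ 0 := sub_ne_zero.mpr hgne
  have hgA : ∀ y : ℝ, A * g y = cj A * cj (g y) := by
    intro y
    have e1 := hconj x₁ y
    have e2 := hconj x₂ y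
    rw [hA, map_sub]
    linear_combination e1 - e2
  have hfB : ∀ x : ℝ, B * f x = cj B * cj (f x) := by
    intro x
    have e1 := hconj x y₁
    have e2 := hconj x y₂
    rw [hB, map_sub]
    linear_combination e1 - e2
  have hK : ∀ x y : ℝ, (cj A * cj B - A * B) * (f x * g y) = cj A * cj B * (cj z₁ - z₁) := by
    intro x y
    have h1 := hconj x y
    have h2 := hgA y
    have h3 := hfB x
    linear_combination (cj A * cj B) * h1 - (cj B * cj (f x)) * h2 - (A * g y) * h3
  have hK0 : cj A * cj B - A * B = 0 := by
    have e1 := hK x₁ y₀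
    have e2 := hK x₂ y₀
    have e3 : (cj A * cj B - A * B) * (A * g y₀) = 0 := by
      rw [hA]
      linear_combination e1 - e2
    rcases mul_eq_zero.mp e3 with h | h
    · exact h
    · exact absurd h (mul_ne_zero hA0 hgy₀)
  have hcc : cj z₁ = z₁ := by
    have e1 := hK x₁ y₀
    rw [hK0, zero_mul] at e1
    have e2 : cj A * cj B ≠ 0 := by
      apply mul_ne_zero
      · simpa [hcj] using hA0
      · simpa [hcj] using hB0
    rcases mul_eq_zero.mp e1.symm with h | h
    · exact absurd h e2
    · linear_combination h
  have hz₁re : (algebraMap ℝ ℂ) z₁.re = z₁ := by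
    rw [show (algebraMap ℝ ℂ) z₁.re = (z₁.re : ℂ) from rfl]
    exact Complex.conj_eq_iff_re.mp hcc
  set z : ℝ := z₁.re with hzdef
  have hfa : f x₁ ≠ 0 ∨ f x₂ ≠ 0 := by
    by_contra hcon
    push_neg at hcon
    exact hfne (by rw [hcon.1, hcon.2])
  obtain ⟨a, hfa0⟩ : ∃ a : ℝ, f a ≠ 0 := by
    rcases hfa with h | h
    · exact ⟨x₁, h⟩
    · exact ⟨x₂, h⟩
  set b : ℝ := y₀ with hbdef
  set s : ℝ := eval ![a, b] h₀ - z with hsdef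
  have hs : algebraMap ℝ ℂ s = f a * g b := by
    rw [hsdef, map_sub, hval a b, hz₁re]
    ring
  have hs0 : s ≠ 0 := by
    intro h
    rw [h, map_zero] at hs
    exact (mul_ne_zero hfa0 hgy₀) hs.symm
  have hmul : ∀ x y : ℝ, s * (eval ![x, y] h₀ - z) =
      (eval ![x, b] h₀ - z) * (eval ![a, y] h₀ - z) := by
    intro x y
    apply (algebraMap ℝ ℂ).injective
    simp only [map_mul, map_sub]
    rw [hval x y, hval x b, hval a y, hs, hz₁re]
    ring
  refine ⟨Polynomial.C s⁻¹ * (MvPolynomial.aeval ![Polynomial.X, Polynomial.C b] h₀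
      - Polynomial.C z), MvPolynomial.aeval ![Polynomial.C a, Polynomial.X] h₀
      - Polynomial.C z, z, ?_⟩
  apply MvPolynomial.funext
  intro v
  have hv : v = ![v 0, v 1] := by funext i; fin_cases i <;> rfl
  rw [map_add, map_mul, evalP, evalP]
  simp only [Polynomial.eval_mul, Polynomial.eval_C, Polynomial.eval_sub, evalA1, evalA2,
    MvPolynomial.eval_C]
  conv_lhs => rw [hv]
  have hm := hmul (v 0) (v 1)
  field_simp
  linear_combination hm
end

section
/- Let f(x,y) = p₁(x) − q₁(y) and g(x,y) = p₂(x) − q₂(y) be bivariate real polynomials with deg p₁ = deg q₁ = d₁ ≥ 1 and deg p₂ = deg q₂ = d₂ ≥ 1, with leading coefficients a₁, b₁ of p₁, q₁ and a₂, b₂ of p₂, q₂ respectively. If f and g have a nontrivial common factor in ℝ[x,y], then (a₁/b₁)^{d₂} = (a₂/b₂)^{d₁}. -/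
open MvPolynomial

namespace CFLaux

noncomputable section

open Finset

variable {R : Type*} [CommRing R]

lemma hc_monomial {σ : Type*} (n : ℕ) (m : σ →₀ ℕ) (c : R) :
    homogeneousComponent n (monomial m c) =
      if Finsupp.degree m = n then monomial m c else 0 := by
  classical
  ext d
  simp only [coeff_homogeneousComponent, apply_ite (coeff d), coeff_zero]
  rw [coeff_monomial]
  by_cases h : m = d
  · subst h; rfl
  · rw [if_neg h, ite_self, ite_self]

lemma hc_td_ne_zero {σ : Type*} {u : MvPolynomial σ R} (hu : u ≠ 0) :
    homogeneousComponent u.totalDegree u ≠ 0 := by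
  obtain ⟨d, hd, hdeg⟩ := Finset.exists_mem_eq_sup u.support
    (MvPolynomial.support_nonempty.mpr hu) (fun m : σ →₀ ℕ => m.sum fun _ e => e)
  intro h
  have hc := coeff_homogeneousComponent (φ := u) (n := u.totalDegree) d
  rw [h, coeff_zero] at hc
  have hdd : Finsupp.degree d = u.totalDegree := by
    rw [totalDegree, hdeg]; rfl
  rw [if_pos hdd] at hc
  exact (mem_support_iff.mp hd) hc.symm

lemma hc_mul {σ : Type*} (u v : MvPolynomial σ R) :
    homogeneousComponent (u.totalDegree + v.totalDegree) (u * v) =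
      homogeneousComponent u.totalDegree u * homogeneousComponent v.totalDegree v := by
  set du := u.totalDegree with hdu
  set dv := v.totalDegree with hdv
  have huv : u * v = ∑ i ∈ range (du + 1), ∑ j ∈ range (dv + 1),
      homogeneousComponent i u * homogeneousComponent j v := by
    rw [← Finset.sum_mul_sum, sum_homogeneousComponent, sum_homogeneousComponent]
  rw [huv, map_sum]
  have hterm : ∀ i ∈ range (du + 1), ∀ j ∈ range (dv + 1),
      homogeneousComponent (du + dv) (homogeneousComponent i u * homogeneousComponent j v) =
      if i = du ∧ j = dv then homogeneousComponent du u * homogeneousComponent dv v else 0 := by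
    intro i hi j hj
    have hmem : homogeneousComponent i u * homogeneousComponent j v ∈
        homogeneousSubmodule σ R (i + j) := by
      rw [mem_homogeneousSubmodule]
      exact (homogeneousComponent_isHomogeneous i u).mul (homogeneousComponent_isHomogeneous j v)
    rw [homogeneousComponent_of_mem hmem]
    rw [mem_range] at hi hj
    by_cases h : i = du ∧ j = dv
    · rw [if_pos (by omega), if_pos h, h.1, h.2]
    · rw [if_neg (by omega), if_neg h]
  calc (∑ i ∈ range (du + 1), homogeneousComponent (du + dv)
          (∑ j ∈ range (dv + 1), homogeneousComponent i u * homogeneousComponent j v))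
      = ∑ i ∈ range (du + 1), ∑ j ∈ range (dv + 1),
          (if i = du ∧ j = dv then homogeneousComponent du u * homogeneousComponent dv v else 0) := by
        refine Finset.sum_congr rfl fun i hi => ?_
        rw [map_sum]
        exact Finset.sum_congr rfl fun j hj => hterm i hi j hj
    _ = ∑ i ∈ range (du + 1), (if i = du then
          homogeneousComponent du u * homogeneousComponent dv v else 0) := by
        refine Finset.sum_congr rfl fun i _ => ?_
        by_cases hi' : i = du
        · have hstep : ∀ j ∈ range (dv + 1),
              (if i = du ∧ j = dv then homogeneousComponent du u * homogeneousComponent dv v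
                else 0) =
              (if j = dv then homogeneousComponent du u * homogeneousComponent dv v else 0) := by
            intro j _
            rw [hi']
            simp
          rw [Finset.sum_congr rfl hstep, Finset.sum_ite_eq' (range (dv + 1)) dv
            (fun _ => homogeneousComponent du u * homogeneousComponent dv v),
            if_pos (Finset.mem_range.mpr (by omega)), if_pos hi']
        · simp [hi']
    _ = homogeneousComponent du u * homogeneousComponent dv v := by
        rw [Finset.sum_ite_eq' (range (du + 1)) du
          (fun _ => homogeneousComponent du u * homogeneousComponent dv v),
          if_pos (Finset.mem_range.mpr (by omega))]

lemma degree_fin2 (d : Fin 2 →₀ ℕ) : Finsupp.degree d = d 0 + d 1 := by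
  have : ∑ i ∈ d.support, d i = ∑ i : Fin 2, d i :=
    Finset.sum_subset (Finset.subset_univ _)
      (fun i _ hi => Finsupp.notMem_support_iff.mp hi)
  show ∑ i ∈ d.support, d i = _
  rw [this, Fin.sum_univ_two]

lemma hc_mul_eq {u v f : MvPolynomial (Fin 2) ℝ} (hf : f = u * v) (hfne : f ≠ 0) :
    f.totalDegree = u.totalDegree + v.totalDegree ∧
    homogeneousComponent f.totalDegree f =
      homogeneousComponent u.totalDegree u * homogeneousComponent v.totalDegree v := by
  have hu : u ≠ 0 := by
    rintro rfl
    rw [zero_mul] at hf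
    exact hfne hf
  have hv : v ≠ 0 := by
    rintro rfl
    rw [mul_zero] at hf
    exact hfne hf
  have hne : homogeneousComponent u.totalDegree u * homogeneousComponent v.totalDegree v ≠ 0 :=
    mul_ne_zero (hc_td_ne_zero hu) (hc_td_ne_zero hv)
  have h1 : f.totalDegree ≤ u.totalDegree + v.totalDegree := hf ▸ totalDegree_mul u v
  have h2 : ¬ f.totalDegree < u.totalDegree + v.totalDegree := by
    intro h
    have hz : homogeneousComponent (u.totalDegree + v.totalDegree) f = 0 :=
      homogeneousComponent_eq_zero _ _ h
    rw [hf, hc_mul] at hz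
    exact hne hz
  have heq : f.totalDegree = u.totalDegree + v.totalDegree := le_antisymm h1 (not_lt.mp h2)
  exact ⟨heq, by rw [heq, hf, hc_mul]⟩

lemma aeval_X_repr (p : Polynomial ℝ) (j : Fin 2) :
    Polynomial.aeval (X j : MvPolynomial (Fin 2) ℝ) p =
      ∑ i ∈ range (p.natDegree + 1), monomial (Finsupp.single j i) (p.coeff i) := by
  rw [Polynomial.aeval_eq_sum_range]
  exact Finset.sum_congr rfl fun i _ => by
    rw [smul_eq_C_mul, C_mul_X_pow_eq_monomial]

lemma lead_f (p q : Polynomial ℝ) (d : ℕ) (hd : 1 ≤ d) (hp : p.natDegree = d)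
    (hq : q.natDegree = d) :
    (Polynomial.aeval (X 0 : MvPolynomial (Fin 2) ℝ) p -
        Polynomial.aeval (X 1 : MvPolynomial (Fin 2) ℝ) q) ≠ 0 ∧
    (Polynomial.aeval (X 0 : MvPolynomial (Fin 2) ℝ) p -
        Polynomial.aeval (X 1 : MvPolynomial (Fin 2) ℝ) q).totalDegree = d ∧
    homogeneousComponent d (Polynomial.aeval (X 0 : MvPolynomial (Fin 2) ℝ) p -
        Polynomial.aeval (X 1 : MvPolynomial (Fin 2) ℝ) q) =
      monomial (Finsupp.single 0 d) p.leadingCoeff -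
        monomial (Finsupp.single 1 d) q.leadingCoeff := by
  have hp0 : p ≠ 0 := fun h => by simp [h] at hp; omega
  have hlc : p.leadingCoeff ≠ 0 := Polynomial.leadingCoeff_ne_zero.mpr hp0
  set f := Polynomial.aeval (X 0 : MvPolynomial (Fin 2) ℝ) p -
      Polynomial.aeval (X 1 : MvPolynomial (Fin 2) ℝ) q with hfdef
  -- the key coefficient
  have hcoefp : coeff (Finsupp.single 0 d) (Polynomial.aeval (X 0 : MvPolynomial (Fin 2) ℝ) p)
      = p.leadingCoeff := by
    rw [aeval_X_repr, ← hp]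
    rw [coeff_sum]
    rw [Finset.sum_eq_single p.natDegree]
    · rw [coeff_monomial, if_pos rfl, Polynomial.leadingCoeff]
    · intro i _ hne
      rw [coeff_monomial, if_neg]
      intro h
      exact hne (by simpa using congrArg (fun m : Fin 2 →₀ ℕ => m 0) h)
    · intro h; simp at h
  have hcoefq : coeff (Finsupp.single 0 d) (Polynomial.aeval (X 1 : MvPolynomial (Fin 2) ℝ) q)
      = 0 := by
    rw [aeval_X_repr, coeff_sum]
    refine Finset.sum_eq_zero fun i _ => ?_
    rw [coeff_monomial, if_neg]
    intro h
    have h0 := congrArg (fun m : Fin 2 →₀ ℕ => m 0) h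
    simp at h0
    omega
  have hfcoef : coeff (Finsupp.single 0 d) f = p.leadingCoeff := by
    rw [hfdef, coeff_sub, hcoefp, hcoefq, sub_zero]
  have hfne : f ≠ 0 := fun h => hlc (by rw [← hfcoef, h, coeff_zero])
  -- total degree
  have haux : ∀ (r : Polynomial ℝ) (j : Fin 2), r.natDegree = d →
      (Polynomial.aeval (X j : MvPolynomial (Fin 2) ℝ) r).totalDegree ≤ d := by
    intro r j hr
    rw [aeval_X_repr]
    refine (totalDegree_finset_sum _ _).trans (Finset.sup_le fun i hi => ?_)
    refine (totalDegree_monomial_le _ _).trans ?_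
    rw [Finsupp.sum_single_index rfl]
    rw [mem_range] at hi
    simp only [id_eq]
    omega
  have htle : f.totalDegree ≤ d :=
    (totalDegree_sub _ _).trans (max_le (haux p 0 hp) (haux q 1 hq))
  have htge : d ≤ f.totalDegree := by
    have hmem : Finsupp.single 0 d ∈ f.support := mem_support_iff.mpr (by rw [hfcoef]; exact hlc)
    have := le_totalDegree hmem
    calc d = Finsupp.degree (Finsupp.single (0 : Fin 2) d) := by
            rw [degree_fin2]; simp
      _ ≤ f.totalDegree := this
  have htd : f.totalDegree = d := le_antisymm htle htge
  refine ⟨hfne, htd, ?_⟩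
  -- homogeneous component
  have hcomp : ∀ (r : Polynomial ℝ) (j : Fin 2), r.natDegree = d →
      homogeneousComponent d (Polynomial.aeval (X j : MvPolynomial (Fin 2) ℝ) r) =
        monomial (Finsupp.single j d) r.leadingCoeff := by
    intro r j hr
    rw [aeval_X_repr, map_sum]
    have : ∀ i ∈ range (r.natDegree + 1),
        homogeneousComponent d (monomial (Finsupp.single j i) (r.coeff i)) =
          if i = d then monomial (Finsupp.single j d) r.leadingCoeff else 0 := by
      intro i hi
      rw [hc_monomial]
      have hdeg : Finsupp.degree (Finsupp.single j i) = i := by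
        fin_cases j <;> (rw [degree_fin2]; simp)
      rw [hdeg]
      by_cases h : i = d
      · subst h; rw [if_pos rfl, if_pos rfl, Polynomial.leadingCoeff, hr]
      · rw [if_neg h, if_neg h]
    rw [Finset.sum_congr rfl this,
      Finset.sum_ite_eq' (range (r.natDegree + 1)) d
        (fun _ => monomial (Finsupp.single j d) r.leadingCoeff),
      if_pos (Finset.mem_range.mpr (by omega))]
  rw [hfdef, map_sub, hcomp p 0 hp, hcomp q 1 hq]

/-- homogeneity is preserved by `map`. -/
lemma isHom_map {h : MvPolynomial (Fin 2) ℝ} {n : ℕ} (hh : h.IsHomogeneous n) :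
    (MvPolynomial.map (algebraMap ℝ ℂ) h).IsHomogeneous n := by
  intro d hd
  apply hh
  rw [coeff_map] at hd
  intro h0
  rw [h0] at hd
  simp at hd

def ψ : MvPolynomial (Fin 2) ℂ →ₐ[ℂ] Polynomial ℂ :=
  aeval (fun i : Fin 2 => if i = 0 then (Polynomial.X : Polynomial ℂ) else 1)

lemma psi_monomial (m : Fin 2 →₀ ℕ) (c : ℂ) :
    ψ (monomial m c) = Polynomial.C c * Polynomial.X ^ (m 0) := by
  rw [ψ, aeval_monomial]
  have : (m.prod fun i k => (if i = 0 then (Polynomial.X : Polynomial ℂ) else 1) ^ k) =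
      Polynomial.X ^ (m 0) := by
    rw [Finsupp.prod_fintype _ _ (fun i => pow_zero _), Fin.prod_univ_two]
    simp
  rw [this]
  rfl

lemma psi_const {h : MvPolynomial (Fin 2) ℂ} {m : ℕ} (hh : h.IsHomogeneous m) {c : ℂ}
    (hpsi : ψ h = Polynomial.C c) : h = monomial (Finsupp.single 1 m) c := by
  have hfin2 : ∀ d ∈ h.support, (d : Fin 2 →₀ ℕ) 0 + d 1 = m := by
    intro d hd
    rw [← degree_fin2]
    by_contra hne
    exact (mem_support_iff.mp hd) (hh.coeff_eq_zero hne)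
  have hpsi_coeff : ∀ k : ℕ, (ψ h).coeff k =
      ∑ d ∈ h.support, if d 0 = k then coeff d h else 0 := by
    intro k
    conv_lhs => rw [show h = ∑ d ∈ h.support, monomial d (coeff d h) from (as_sum h)]
    rw [map_sum, Polynomial.finset_sum_coeff]
    refine Finset.sum_congr rfl fun d _ => ?_
    rw [psi_monomial, Polynomial.coeff_C_mul, Polynomial.coeff_X_pow]
    by_cases hk : d 0 = k
    · rw [if_pos hk, if_pos hk.symm, mul_one]
    · rw [if_neg hk, if_neg (Ne.symm hk), mul_zero]
  ext d
  rw [coeff_monomial]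
  by_cases hdeg : Finsupp.degree d = m
  · have hd2 : d 0 + d 1 = m := by rw [← degree_fin2]; exact hdeg
    have hsum : (ψ h).coeff (d 0) = coeff d h := by
      rw [hpsi_coeff]
      have hone : ∀ b ∈ h.support, b ≠ d → (if b 0 = d 0 then coeff b h else 0) = 0 := by
        intro b hb hne
        rw [if_neg]
        intro hb0
        apply hne
        have hb2 := hfin2 b hb
        ext i
        fin_cases i
        · exact hb0
        · simpa using (by omega : b 1 = d 1)
      have htwo : d ∉ h.support → (if (d : Fin 2 →₀ ℕ) 0 = d 0 then coeff d h else 0) = 0 := by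
        intro hd
        rw [if_pos rfl]
        exact notMem_support_iff.mp hd
      have hsingle := Finset.sum_eq_single (s := h.support)
        (f := fun d' => if d' 0 = d 0 then coeff d' h else 0) d hone htwo
      rw [hsingle]
      simp
    rw [hpsi, Polynomial.coeff_C] at hsum
    by_cases h0 : d 0 = 0
    · have : Finsupp.single (1 : Fin 2) m = d := by
        ext i; fin_cases i
        · simpa using h0.symm
        · simpa using (by omega : m = d 1)
      rw [if_pos this, ← hsum, if_pos h0]
    · rw [if_neg (fun hcon => h0 (by simpa using (congrArg (fun m : Fin 2 →₀ ℕ => m 0) hcon).symm))]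
      rw [← hsum, if_neg h0]
  · rw [hh.coeff_eq_zero hdeg, if_neg]
    intro hcon
    apply hdeg
    rw [← hcon, degree_fin2]
    simp

end

end CFLaux

open CFLaux in
/-- If `f(x,y) = p₁(x) − q₁(y)` and `g(x,y) = p₂(x) − q₂(y)`, with `deg p₁ = deg q₁ = d₁ ≥ 1`
and `deg p₂ = deg q₂ = d₂ ≥ 1`, have a nontrivial common factor in `ℝ[x,y]`, then, for the
leading coefficients `a₁, b₁, a₂, b₂` of `p₁, q₁, p₂, q₂`, we have
`(a₁/b₁)^{d₂} = (a₂/b₂)^{d₁}`. -/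
theorem common_factor_leading_coeffs (p₁ q₁ p₂ q₂ : Polynomial ℝ) (d₁ d₂ : ℕ)
    (hd₁ : 1 ≤ d₁) (hd₂ : 1 ≤ d₂)
    (hp₁ : p₁.natDegree = d₁) (hq₁ : q₁.natDegree = d₁)
    (hp₂ : p₂.natDegree = d₂) (hq₂ : q₂.natDegree = d₂)
    (hcf : ∃ w : MvPolynomial (Fin 2) ℝ, w ≠ 0 ∧ ¬ IsUnit w ∧
      w ∣ (Polynomial.aeval (X 0 : MvPolynomial (Fin 2) ℝ) p₁ -
            Polynomial.aeval (X 1 : MvPolynomial (Fin 2) ℝ) q₁) ∧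
      w ∣ (Polynomial.aeval (X 0 : MvPolynomial (Fin 2) ℝ) p₂ -
            Polynomial.aeval (X 1 : MvPolynomial (Fin 2) ℝ) q₂)) :
    (p₁.leadingCoeff / q₁.leadingCoeff) ^ d₂ = (p₂.leadingCoeff / q₂.leadingCoeff) ^ d₁ := by
  classical
  obtain ⟨w, hw0, hwu, ⟨v₁, hv₁⟩, ⟨v₂, hv₂⟩⟩ := hcf
  set a₁ := p₁.leadingCoeff
  set b₁ := q₁.leadingCoeff
  set a₂ := p₂.leadingCoeff
  set b₂ := q₂.leadingCoeff
  obtain ⟨hf₁ne, hf₁td, hf₁hc⟩ := lead_f p₁ q₁ d₁ hd₁ hp₁ hq₁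
  obtain ⟨hf₂ne, hf₂td, hf₂hc⟩ := lead_f p₂ q₂ d₂ hd₂ hp₂ hq₂
  obtain ⟨htd₁, hmul₁⟩ := hc_mul_eq hv₁ hf₁ne
  obtain ⟨htd₂, hmul₂⟩ := hc_mul_eq hv₂ hf₂ne
  set W := homogeneousComponent w.totalDegree w with hWdef
  have hWne : W ≠ 0 := hc_td_ne_zero hw0
  have hWhom : W.IsHomogeneous w.totalDegree := homogeneousComponent_isHomogeneous _ _
  -- degree of w is at least 1
  have hdw : 1 ≤ w.totalDegree := by
    by_contra h
    push_neg at h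
    have h0 : w.totalDegree = 0 := by omega
    have hwC : w = C (coeff 0 w) := by
      ext d
      by_cases hd : d = 0
      · subst hd; simp
      · rw [coeff_C, if_neg (Ne.symm hd)]
        refine ((totalDegree_zero_iff_isHomogeneous (Fin 2)).mp h0).coeff_eq_zero ?_
        exact fun hdeg => hd ((Finsupp.degree_eq_zero_iff d).mp hdeg)
    apply hwu
    rw [hwC]
    refine IsUnit.map (C : ℝ →+* MvPolynomial (Fin 2) ℝ) (isUnit_iff_ne_zero.mpr ?_)
    intro h0'
    exact hw0 (by rw [hwC, h0', map_zero])
  -- divisibility of leading forms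
  have hdvd₁ : W ∣ (monomial (Finsupp.single 0 d₁) a₁ - monomial (Finsupp.single 1 d₁) b₁) := by
    rw [← hf₁hc, ← hf₁td]
    exact ⟨_, hmul₁⟩
  have hdvd₂ : W ∣ (monomial (Finsupp.single 0 d₂) a₂ - monomial (Finsupp.single 1 d₂) b₂) := by
    rw [← hf₂hc, ← hf₂td]
    exact ⟨_, hmul₂⟩
  -- move to ℂ
  set φ : MvPolynomial (Fin 2) ℝ →+* MvPolynomial (Fin 2) ℂ := MvPolynomial.map (algebraMap ℝ ℂ) with hφdef
  have hφinj : Function.Injective φ := MvPolynomial.map_injective _ (algebraMap ℝ ℂ).injective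
  set W' := φ W with hW'def
  have hW'ne : W' ≠ 0 := fun h => hWne (hφinj (by rw [map_zero]; exact h))
  have hW'hom : W'.IsHomogeneous w.totalDegree := isHom_map hWhom
  have hdvd₁' : W' ∣ (monomial (Finsupp.single 0 d₁) (a₁ : ℂ) -
      monomial (Finsupp.single 1 d₁) (b₁ : ℂ)) := by
    have := map_dvd (MvPolynomial.map (algebraMap ℝ ℂ)) hdvd₁
    simpa [map_sub, map_monomial] using this
  have hdvd₂' : W' ∣ (monomial (Finsupp.single 0 d₂) (a₂ : ℂ) -
      monomial (Finsupp.single 1 d₂) (b₂ : ℂ)) := by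
    have := map_dvd (MvPolynomial.map (algebraMap ℝ ℂ)) hdvd₂
    simpa [map_sub, map_monomial] using this
  -- dehomogenize
  set U := ψ W' with hUdef
  have hψ₁ : ψ (monomial (Finsupp.single 0 d₁) (a₁ : ℂ) -
      monomial (Finsupp.single 1 d₁) (b₁ : ℂ)) =
      Polynomial.C (a₁ : ℂ) * Polynomial.X ^ d₁ - Polynomial.C (b₁ : ℂ) := by
    rw [map_sub, psi_monomial, psi_monomial]
    simp
  have hψ₂ : ψ (monomial (Finsupp.single 0 d₂) (a₂ : ℂ) -
      monomial (Finsupp.single 1 d₂) (b₂ : ℂ)) =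
      Polynomial.C (a₂ : ℂ) * Polynomial.X ^ d₂ - Polynomial.C (b₂ : ℂ) := by
    rw [map_sub, psi_monomial, psi_monomial]
    simp
  have hUdvd₁ : U ∣ Polynomial.C (a₁ : ℂ) * Polynomial.X ^ d₁ - Polynomial.C (b₁ : ℂ) := by
    rw [← hψ₁]; exact map_dvd ψ hdvd₁'
  have hUdvd₂ : U ∣ Polynomial.C (a₂ : ℂ) * Polynomial.X ^ d₂ - Polynomial.C (b₂ : ℂ) := by
    rw [← hψ₂]; exact map_dvd ψ hdvd₂'
  have ha₁ : a₁ ≠ 0 := Polynomial.leadingCoeff_ne_zero.mpr (fun h => by simp [h] at hp₁; omega)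
  have hb₁ : b₁ ≠ 0 := Polynomial.leadingCoeff_ne_zero.mpr (fun h => by simp [h] at hq₁; omega)
  have ha₂ : a₂ ≠ 0 := Polynomial.leadingCoeff_ne_zero.mpr (fun h => by simp [h] at hp₂; omega)
  have hb₂ : b₂ ≠ 0 := Polynomial.leadingCoeff_ne_zero.mpr (fun h => by simp [h] at hq₂; omega)
  -- U is nonconstant
  have hUdeg : 0 < U.degree := by
    rcases Nat.eq_zero_or_pos U.natDegree with h0 | hpos
    · exfalso
      have hUC : U = Polynomial.C (U.coeff 0) := Polynomial.eq_C_of_natDegree_eq_zero h0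
      have hW'mono : W' = monomial (Finsupp.single 1 w.totalDegree) (U.coeff 0) :=
        psi_const hW'hom (by rw [← hUC])
      set c := U.coeff 0
      have hcne : c ≠ 0 := by
        intro h
        exact hW'ne (by rw [hW'mono, h, map_zero])
      -- evaluate at (1,0)
      obtain ⟨k, hk⟩ := hdvd₁'
      rw [hW'mono] at hk
      have heq := congrArg (eval ![(1 : ℂ), 0]) hk
      have heval : ∀ (j : Fin 2) (n : ℕ) (cc : ℂ),
          eval ![(1 : ℂ), 0] (monomial (Finsupp.single j n) cc) = cc * (![(1 : ℂ), 0] j) ^ n := by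
        intro j n cc
        rw [eval_monomial,
          Finsupp.prod_single_index (h := fun i e => (![(1 : ℂ), 0] i) ^ e) (pow_zero _)]
      rw [eval_sub, eval_mul, heval, heval, heval, Matrix.cons_val_zero, Matrix.cons_val_one,
        Matrix.cons_val_zero, one_pow, mul_one, zero_pow (by omega : d₁ ≠ 0),
        zero_pow (by omega : w.totalDegree ≠ 0), mul_zero, mul_zero, zero_mul, sub_zero] at heq
      exact ha₁ (by exact_mod_cast heq)
    · exact Polynomial.natDegree_pos_iff_degree_pos.mp hpos
  obtain ⟨t, ht⟩ := Complex.exists_root hUdeg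
  have hroot : ∀ {P : Polynomial ℂ}, U ∣ P → P.eval t = 0 := by
    intro P hP
    obtain ⟨k, hk⟩ := hP
    rw [hk, Polynomial.eval_mul, ht, zero_mul]
  have hr₁ : (a₁ : ℂ) * t ^ d₁ = (b₁ : ℂ) := by
    have := hroot hUdvd₁
    rw [Polynomial.eval_sub, Polynomial.eval_mul, Polynomial.eval_C, Polynomial.eval_pow,
      Polynomial.eval_X, Polynomial.eval_C, sub_eq_zero] at this
    exact this
  have hr₂ : (a₂ : ℂ) * t ^ d₂ = (b₂ : ℂ) := by
    have := hroot hUdvd₂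
    rw [Polynomial.eval_sub, Polynomial.eval_mul, Polynomial.eval_C, Polynomial.eval_pow,
      Polynomial.eval_X, Polynomial.eval_C, sub_eq_zero] at this
    exact this
  have ht0 : t ≠ 0 := by
    rintro rfl
    rw [zero_pow (by omega), mul_zero] at hr₁
    exact hb₁ (by exact_mod_cast hr₁.symm)
  -- final computation over ℂ
  have hC : ((a₁ : ℂ) / (b₁ : ℂ)) ^ d₂ = ((a₂ : ℂ) / (b₂ : ℂ)) ^ d₁ := by
    rw [← hr₁, ← hr₂]
    have ha₁' : (a₁ : ℂ) ≠ 0 := by exact_mod_cast ha₁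
    have ha₂' : (a₂ : ℂ) ≠ 0 := by exact_mod_cast ha₂
    have e₁ : (a₁ : ℂ) / ((a₁ : ℂ) * t ^ d₁) = (t ^ d₁)⁻¹ := by
      field_simp
    have e₂ : (a₂ : ℂ) / ((a₂ : ℂ) * t ^ d₂) = (t ^ d₂)⁻¹ := by
      field_simp
    rw [e₁, e₂, ← inv_pow, ← inv_pow, ← pow_mul, ← pow_mul, Nat.mul_comm]
  have := hC
  rw [show ((a₁ : ℂ) / (b₁ : ℂ)) = ((a₁ / b₁ : ℝ) : ℂ) from by push_cast; ring,
    show ((a₂ : ℂ) / (b₂ : ℂ)) = ((a₂ / b₂ : ℝ) : ℂ) from by push_cast; ring] at this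
  rw [← Complex.ofReal_pow, ← Complex.ofReal_pow] at this
  exact_mod_cast this
end

section
/- Let f, g be bivariate real polynomials of degrees d_f and d_g respectively. If f and g vanish simultaneously at more than d_f·d_g points of ℝ², then f and g have a common non-constant factor in ℝ[x,y]. -/
open MvPolynomial Module

set_option maxRecDepth 4000




noncomputable def homz : MvPolynomial (Fin 2) ℝ →+* Polynomial (MvPolynomial (Fin 2) ℝ) :=
  eval₂Hom (Polynomial.C.comp MvPolynomial.C) fun i => Polynomial.C (X i) * Polynomial.X

lemma homz_monomial (d : Fin 2 →₀ ℕ) (a : ℝ) :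
    homz (monomial d a) = Polynomial.C (monomial d a) * Polynomial.X ^ (∑ x ∈ d.support, d x) := by
  rw [monomial_eq]
  rw [map_mul, map_finsuppProd]
  simp only [homz, map_pow, eval₂Hom_C, eval₂Hom_X', RingHom.coe_comp, Function.comp_apply]
  simp only [mul_pow, ← Polynomial.C_pow]
  rw [Finsupp.prod, Finset.prod_mul_distrib, ← map_prod, Finset.prod_pow_eq_pow_sum]
  rw [Finsupp.prod, map_mul]
  ring

lemma homz_coeff (p : MvPolynomial (Fin 2) ℝ) (k : ℕ) :
    (homz p).coeff k = homogeneousComponent k p := by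
  conv_lhs => rw [p.as_sum]
  rw [map_sum, Polynomial.finset_sum_coeff]
  rw [homogeneousComponent_apply, Finset.sum_filter]
  refine Finset.sum_congr rfl fun d _ => ?_
  rw [homz_monomial, Polynomial.coeff_C_mul, Polynomial.coeff_X_pow, mul_ite, mul_one, mul_zero]
  congr 1
  simp [Finsupp.degree_apply, eq_comm]

lemma totalDegree_eq_sup (p : MvPolynomial (Fin 2) ℝ) :
    p.totalDegree = p.support.sup fun d => ∑ x ∈ d.support, d x := rfl

lemma homogeneousComponent_totalDegree_ne_zero {p : MvPolynomial (Fin 2) ℝ} (hp : p ≠ 0) :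
    homogeneousComponent p.totalDegree p ≠ 0 := by
  obtain ⟨d, hd, hsum⟩ := Finset.exists_mem_eq_sup p.support
    (support_nonempty.2 hp) (fun d => ∑ x ∈ d.support, d x)
  intro h
  have hc := coeff_homogeneousComponent (n := p.totalDegree) (φ := p) d
  rw [h, totalDegree_eq_sup, hsum, coeff_zero] at hc
  simp only [Finsupp.degree_apply, if_pos rfl] at hc
  exact (mem_support_iff.1 hd) hc.symm

lemma homz_ne_zero {p : MvPolynomial (Fin 2) ℝ} (hp : p ≠ 0) : homz p ≠ 0 := by
  intro h
  apply homogeneousComponent_totalDegree_ne_zero hp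
  rw [← homz_coeff, h, Polynomial.coeff_zero]

lemma natDegree_homz {p : MvPolynomial (Fin 2) ℝ} (hp : p ≠ 0) :
    (homz p).natDegree = p.totalDegree := by
  refine le_antisymm (Polynomial.natDegree_le_iff_coeff_eq_zero.2 fun N hN => ?_)
    (Polynomial.le_natDegree_of_ne_zero ?_)
  · rw [homz_coeff]; exact homogeneousComponent_eq_zero _ _ hN
  · rw [homz_coeff]; exact homogeneousComponent_totalDegree_ne_zero hp

lemma totalDegree_mul_eq {p q : MvPolynomial (Fin 2) ℝ} (hp : p ≠ 0) (hq : q ≠ 0) :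
    (p * q).totalDegree = p.totalDegree + q.totalDegree := by
  have h := Polynomial.natDegree_mul (homz_ne_zero hp) (homz_ne_zero hq)
  rw [← map_mul, natDegree_homz (mul_ne_zero hp hq), natDegree_homz hp, natDegree_homz hq] at h
  exact h


/-- number of monomials of degree at most k in two variables -/
def Td (k : ℕ) : ℕ := (k+1)*(k+2)/2

lemma two_Td (k : ℕ) : 2 * Td k = (k+1)*(k+2) := by
  have h : Even ((k+1)*(k+2)) := Nat.even_mul_succ_self (k+1)
  exact Nat.mul_div_cancel' h.two_dvd

lemma Td_id (m n j : ℕ) : Td (m+n+j) + Td j = Td (m+j) + Td (n+j) + m*n := by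
  have h : 2 * (Td (m+n+j) + Td j) = 2 * (Td (m+j) + Td (n+j) + m*n) := by
    simp only [Nat.mul_add, two_Td]; ring
  omega

/-- the pairs (a,b) with a+b ≤ k -/
def Pd (k : ℕ) : Finset (ℕ × ℕ) := (Finset.range (k+1)).biUnion Finset.HasAntidiagonal.antidiagonal

lemma mem_Pd {k : ℕ} {p : ℕ × ℕ} : p ∈ Pd k ↔ p.1 + p.2 ≤ k := by
  simp only [Pd, Finset.mem_biUnion, Finset.mem_range, Finset.HasAntidiagonal.mem_antidiagonal]
  constructor
  · rintro ⟨j, hj, rfl⟩; omega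
  · intro h; exact ⟨p.1+p.2, by omega, rfl⟩

lemma card_Pd (k : ℕ) : (Pd k).card = Td k := by
  rw [Pd, Finset.card_biUnion]
  · simp only [Finset.Nat.card_antidiagonal]
    induction k with
    | zero => rfl
    | succ k ih =>
        rw [Finset.sum_range_succ, ih]
        have h1 := two_Td k; have h2 := two_Td (k+1)
        have e1 : (k+1)*(k+2) = k*k+3*k+2 := by ring
        have e2 : (k+1+1)*(k+1+2) = k*k+5*k+6 := by ring
        omega
  · intro i _ j _ hij
    simp only [Finset.disjoint_left, Finset.HasAntidiagonal.mem_antidiagonal]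
    rintro a rfl h; exact hij h

/-- pairs to finsupps -/
noncomputable def toF (p : ℕ × ℕ) : Fin 2 →₀ ℕ := Finsupp.equivFunOnFinite.symm ![p.1, p.2]

lemma toF_injective : Function.Injective toF := by
  intro p q h
  have h' := congrArg (fun d : Fin 2 →₀ ℕ => (d 0, d 1)) h
  simpa [toF, Prod.ext_iff] using h'

lemma toF_apply (p : ℕ × ℕ) : (toF p : Fin 2 → ℕ) = ![p.1, p.2] := rfl

lemma sum_toF (p : ℕ × ℕ) : ((toF p).sum fun _ e => e) = p.1 + p.2 := by
  rw [Finsupp.sum_fintype _ _ (fun _ => rfl), Fin.sum_univ_two]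
  simp [toF]

lemma surj_toF {d : Fin 2 →₀ ℕ} : d = toF (d 0, d 1) := by
  ext i; fin_cases i <;> simp [toF]

lemma sum_eq (d : Fin 2 →₀ ℕ) : (d.sum fun _ e => e) = d 0 + d 1 := by
  conv_lhs => rw [surj_toF (d := d)]
  rw [sum_toF]

/-- monomial exponents of degree ≤ k -/
noncomputable def Fd (k : ℕ) : Finset (Fin 2 →₀ ℕ) := (Pd k).image toF

lemma mem_Fd {k : ℕ} {d : Fin 2 →₀ ℕ} : d ∈ Fd k ↔ (d.sum fun _ e => e) ≤ k := by
  simp only [Fd, Finset.mem_image]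
  constructor
  · rintro ⟨p, hp, rfl⟩; rw [sum_toF]; exact mem_Pd.1 hp
  · intro h
    exact ⟨(d 0, d 1), mem_Pd.2 (by rw [← sum_eq]; exact h), (surj_toF).symm⟩

lemma card_Fd (k : ℕ) : (Fd k).card = Td k := by
  rw [Fd, Finset.card_image_of_injective _ toF_injective, card_Pd]

/-- the monomials of degree ≤ k -/
noncomputable def Md (k : ℕ) : Finset (MvPolynomial (Fin 2) ℝ) :=
  (Fd k).image fun d => monomial d (1:ℝ)

lemma card_Md (k : ℕ) : (Md k).card = Td k := by
  rw [Md, Finset.card_image_of_injective _ (monomial_left_injective one_ne_zero), card_Fd]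

lemma span_Md (k : ℕ) :
    Submodule.span ℝ (Md k : Set (MvPolynomial (Fin 2) ℝ))
      = restrictTotalDegree (Fin 2) ℝ k := by
  apply le_antisymm
  · rw [Submodule.span_le]
    intro q hq
    simp only [Md, Finset.coe_image, Set.mem_image, Finset.mem_coe] at hq
    obtain ⟨d, hd, rfl⟩ := hq
    rw [SetLike.mem_coe, mem_restrictTotalDegree, totalDegree_monomial _ (one_ne_zero)]
    exact mem_Fd.1 hd
  · intro p hp
    rw [mem_restrictTotalDegree] at hp
    rw [p.as_sum]
    apply Submodule.sum_mem
    intro d hd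
    have h1 : monomial d (coeff d p) = (coeff d p) • monomial d (1:ℝ) := by
      rw [smul_monomial, smul_eq_mul, mul_one]
    rw [h1]
    apply Submodule.smul_mem
    apply Submodule.subset_span
    simp only [Md, Finset.coe_image, Set.mem_image, Finset.mem_coe]
    refine ⟨d, mem_Fd.2 ?_, rfl⟩
    exact le_trans (Finset.le_sup (f := fun s : Fin 2 →₀ ℕ => s.sum fun _ e => e) hd) hp

lemma finrank_V (k : ℕ) :
    finrank ℝ (restrictTotalDegree (Fin 2) ℝ k) = Td k := by
  rw [← span_Md, finrank_span_set_eq_card, ← card_Md k]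
  · rw [Finset.toFinset_coe]
  · have h0 : LinearIndependent ℝ (Subtype.val : Set.range (fun d : Fin 2 →₀ ℕ => monomial d (1:ℝ)) → MvPolynomial (Fin 2) ℝ) := by
      apply LinearIndependent.linearIndepOn_id
      have := (basisMonomials (Fin 2) ℝ).linearIndependent
      rwa [coe_basisMonomials] at this
    apply LinearIndepOn.mono (v := id) (s := Set.range fun d : Fin 2 →₀ ℕ => monomial d (1:ℝ)) h0
    rintro q hq
    simp only [Md, Finset.coe_image, Set.mem_image, Finset.mem_coe] at hq
    obtain ⟨d, _, rfl⟩ := hq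
    exact Set.mem_range_self d



local notation "R2" => MvPolynomial (Fin 2) ℝ
local notation "V " k => restrictTotalDegree (Fin 2) ℝ k

/-- evaluation linear map -/
noncomputable def evL (N : ℕ) (S : Finset (ℝ × ℝ)) :
    (V N) →ₗ[ℝ] ({x // x ∈ S} → ℝ) where
  toFun p := fun s => eval ![(s : ℝ × ℝ).1, (s : ℝ × ℝ).2] (p : R2)
  map_add' p q := by funext s; simp
  map_smul' c p := by
    funext s
    simp [Submodule.coe_smul, smul_eq_C_mul]

/-- interpolation polynomial -/
noncomputable def qS (S : Finset (ℝ × ℝ)) (p₀ : ℝ × ℝ) : R2 :=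
  ∏ r ∈ S.erase p₀, (if p₀.1 ≠ r.1 then X 0 - C r.1 else X 1 - C r.2)

lemma qS_deg (S : Finset (ℝ × ℝ)) (p₀ : ℝ × ℝ) :
    (qS S p₀).totalDegree ≤ (S.erase p₀).card := by
  refine le_trans (totalDegree_finset_prod _ _) ?_
  have h1 : ∀ r ∈ S.erase p₀,
      (if p₀.1 ≠ r.1 then X (0 : Fin 2) - C r.1 else X 1 - C r.2).totalDegree ≤ 1 := by
    intro r _
    split_ifs
    · exact le_trans (totalDegree_sub_C_le _ _) (totalDegree_X _).le
    · exact le_trans (totalDegree_sub_C_le _ _) (totalDegree_X _).le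
  refine le_trans (Finset.sum_le_card_nsmul _ _ 1 h1) ?_
  simp

lemma eval_qS_self {S : Finset (ℝ × ℝ)} {p₀ : ℝ × ℝ} :
    eval ![p₀.1, p₀.2] (qS S p₀) ≠ 0 := by
  rw [qS, map_prod]
  apply Finset.prod_ne_zero_iff.2
  intro r hr
  rcases Finset.mem_erase.1 hr with ⟨hne, _⟩
  split_ifs with h
  · simp only [map_sub, eval_X, eval_C]
    simpa [sub_eq_zero] using h
  · push_neg at h
    have h2 : p₀.2 ≠ r.2 := fun h2 => hne (Prod.ext h.symm h2.symm)
    simp only [map_sub, eval_X, eval_C]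
    simpa [sub_eq_zero] using h2

lemma eval_qS_other {S : Finset (ℝ × ℝ)} {p₀ r : ℝ × ℝ} (hr : r ∈ S) (hne : r ≠ p₀) :
    eval ![r.1, r.2] (qS S p₀) = 0 := by
  rw [qS, map_prod]
  apply Finset.prod_eq_zero (Finset.mem_erase.2 ⟨hne, hr⟩)
  split_ifs with h
  · simp
  · simp

lemma evL_surjective (N : ℕ) (S : Finset (ℝ × ℝ)) (hcard : S.card ≤ N + 1) :
    Function.Surjective (evL N S) := by
  intro u
  have hmem : ∀ p₀ : ℝ × ℝ, p₀ ∈ S → qS S p₀ ∈ (V N) := by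
    intro p₀ hp₀
    rw [mem_restrictTotalDegree]
    refine le_trans (qS_deg S p₀) ?_
    rw [Finset.card_erase_of_mem hp₀]
    omega
  refine ⟨∑ s ∈ S.attach, (u s / eval ![(s : ℝ × ℝ).1, (s : ℝ × ℝ).2] (qS S s)) •
      (⟨qS S s, hmem s s.2⟩ : V N), ?_⟩
  funext s₀
  rw [map_sum]
  simp only [map_smul, Finset.sum_apply, Pi.smul_apply]
  have hsingle : ∀ s ∈ S.attach, s ≠ s₀ →
      (u s / eval ![(s : ℝ × ℝ).1, (s : ℝ × ℝ).2] (qS S s)) •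
        ((evL N S) ⟨qS S s, hmem s s.2⟩ s₀) = 0 := by
    intro s _ hs
    have hz : eval ![(s₀ : ℝ × ℝ).1, (s₀ : ℝ × ℝ).2] (qS S s) = 0 :=
      eval_qS_other s₀.2 (fun h => hs (Subtype.ext h.symm))
    simp only [evL, LinearMap.coe_mk, AddHom.coe_mk]
    rw [hz, smul_eq_mul, mul_zero]
  rw [Finset.sum_eq_single s₀ hsingle (fun h => absurd (Finset.mem_attach _ _) h)]
  simp only [evL, LinearMap.coe_mk, AddHom.coe_mk, smul_eq_mul]
  exact div_mul_cancel₀ _ eval_qS_self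

lemma key (f g : MvPolynomial (Fin 2) ℝ) (hf : f ≠ 0) (hg : g ≠ 0)
    (hrp : IsRelPrime f g) (S : Finset (ℝ × ℝ))
    (hzero : ∀ p ∈ S, eval ![p.1, p.2] f = 0 ∧ eval ![p.1, p.2] g = 0) :
    S.card ≤ f.totalDegree * g.totalDegree := by
  by_contra hcard
  push_neg at hcard
  set m := f.totalDegree with hm
  set n := g.totalDegree with hn
  set j := m * n with hj
  obtain ⟨S', hS'sub, hS'card⟩ := Finset.exists_subset_card_eq
    (show j + 1 ≤ S.card from hcard)
  set N := m + n + j with hN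
  -- the multiplication map Φ
  have memΦ : ∀ uv : (V (n+j)) × (V (m+j)),
      ((LinearMap.mulRight ℝ f).comp ((V (n+j)).subtype.comp
          (LinearMap.fst ℝ (V (n+j)) (V (m+j)))) +
        (LinearMap.mulRight ℝ g).comp ((V (m+j)).subtype.comp
          (LinearMap.snd ℝ (V (n+j)) (V (m+j))))) uv ∈ (V N) := by
    intro uv
    simp only [LinearMap.add_apply, LinearMap.coe_comp, Function.comp_apply,
      LinearMap.mulRight_apply, Submodule.coe_subtype, LinearMap.fst_apply, LinearMap.snd_apply]
    rw [mem_restrictTotalDegree]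
    refine le_trans (totalDegree_add _ _) (max_le ?_ ?_)
    · refine le_trans (totalDegree_mul _ _) ?_
      have := (mem_restrictTotalDegree _ _ (uv.1 : R2)).1 uv.1.2
      omega
    · refine le_trans (totalDegree_mul _ _) ?_
      have := (mem_restrictTotalDegree _ _ (uv.2 : R2)).1 uv.2.2
      omega
  set Φ : ((V (n+j)) × (V (m+j))) →ₗ[ℝ] (V N) :=
    LinearMap.codRestrict _ _ memΦ with hΦ
  have Φ_apply : ∀ uv : (V (n+j)) × (V (m+j)),
      (Φ uv : R2) = (uv.1 : R2) * f + (uv.2 : R2) * g := by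
    intro uv
    simp [hΦ, LinearMap.codRestrict]
  -- the map Ψ
  have memΨ1 : ∀ w : (V j), ((LinearMap.mulRight ℝ g).comp (V j).subtype) w ∈ (V (n+j)) := by
    intro w
    simp only [LinearMap.coe_comp, Function.comp_apply, LinearMap.mulRight_apply,
      Submodule.coe_subtype]
    rw [mem_restrictTotalDegree]
    refine le_trans (totalDegree_mul _ _) ?_
    have := (mem_restrictTotalDegree _ _ (w : R2)).1 w.2
    omega
  have memΨ2 : ∀ w : (V j), (-((LinearMap.mulRight ℝ f).comp (V j).subtype)) w ∈ (V (m+j)) := by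
    intro w
    simp only [LinearMap.neg_apply, LinearMap.coe_comp, Function.comp_apply,
      LinearMap.mulRight_apply, Submodule.coe_subtype]
    rw [mem_restrictTotalDegree, totalDegree_neg]
    refine le_trans (totalDegree_mul _ _) ?_
    have := (mem_restrictTotalDegree _ _ (w : R2)).1 w.2
    omega
  set Ψ : (V j) →ₗ[ℝ] ((V (n+j)) × (V (m+j))) :=
    (LinearMap.codRestrict _ _ memΨ1).prod (LinearMap.codRestrict _ _ memΨ2) with hΨ
  have Ψ_apply : ∀ w : (V j),
      ((Ψ w).1 : R2) = (w : R2) * g ∧ ((Ψ w).2 : R2) = -((w : R2) * f) := by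
    intro w
    constructor <;> simp [hΨ, LinearMap.codRestrict, mul_comm]
  -- kernel of Φ is contained in the range of Ψ
  have hkerΦ : LinearMap.ker Φ ≤ LinearMap.range Ψ := by
    rintro ⟨u, v⟩ huv
    rw [LinearMap.mem_ker] at huv
    have heq : (u : R2) * f + (v : R2) * g = 0 := by
      rw [← Φ_apply (u, v), huv]; rfl
    have hdvd : g ∣ f * (u : R2) := ⟨-(v : R2), by linear_combination heq⟩
    have hgu : g ∣ (u : R2) := (hrp.symm).dvd_of_dvd_mul_left hdvd
    obtain ⟨w, hw⟩ := hgu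
    have hwdeg : w.totalDegree ≤ j := by
      rcases eq_or_ne w 0 with rfl | hw0
      · simp
      · have hdu : (u : R2).totalDegree ≤ n + j :=
          (mem_restrictTotalDegree _ _ (u : R2)).1 u.2
        rw [hw, totalDegree_mul_eq hg hw0] at hdu
        omega
    have hv : (v : R2) = -(w * f) := by
      have h2 : g * ((v : R2) + w * f) = 0 := by
        rw [hw] at heq; linear_combination heq
      rcases mul_eq_zero.1 h2 with h3 | h3
      · exact absurd h3 hg
      · exact eq_neg_of_add_eq_zero_left h3
    refine ⟨⟨w, (mem_restrictTotalDegree _ _ w).2 hwdeg⟩, ?_⟩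
    have happ := Ψ_apply ⟨w, (mem_restrictTotalDegree _ _ w).2 hwdeg⟩
    refine Prod.ext (Subtype.ext ?_) (Subtype.ext ?_)
    · rw [happ.1]; rw [hw]; ring
    · rw [happ.2]; rw [hv]
  -- the range of Φ is contained in the kernel of the evaluation map
  have hrangeΦ : LinearMap.range Φ ≤ LinearMap.ker (evL N S') := by
    rintro p ⟨uv, rfl⟩
    rw [LinearMap.mem_ker]
    funext s
    have hmem := hS'sub s.2
    have h1 := (hzero s hmem).1
    have h2 := (hzero s hmem).2
    show eval ![(s : ℝ × ℝ).1, (s : ℝ × ℝ).2] ((Φ uv : R2)) = 0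
    rw [Φ_apply, map_add, map_mul, map_mul, h1, h2, mul_zero, mul_zero, add_zero]
  -- dimension counting
  have hsurj : Function.Surjective (evL N S') := by
    apply evL_surjective
    rw [hS'card]
    omega
  haveI : Module.Free ℝ (V (n+j)) := Module.Free.of_divisionRing ℝ _
  haveI : Module.Free ℝ (V (m+j)) := Module.Free.of_divisionRing ℝ _
  have e1 : finrank ℝ (LinearMap.range Φ) + finrank ℝ (LinearMap.ker Φ)
      = Td (n+j) + Td (m+j) := by
    rw [LinearMap.finrank_range_add_finrank_ker, Module.finrank_prod, finrank_V, finrank_V]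
  have e2 : finrank ℝ (LinearMap.ker Φ) ≤ Td j := by
    refine le_trans (Submodule.finrank_mono hkerΦ) ?_
    refine le_trans (LinearMap.finrank_range_le Ψ) ?_
    rw [finrank_V]
  have e3 : finrank ℝ (LinearMap.range Φ) ≤ finrank ℝ (LinearMap.ker (evL N S')) :=
    Submodule.finrank_mono hrangeΦ
  have e4 : (j + 1) + finrank ℝ (LinearMap.ker (evL N S')) = Td N := by
    have h5 := LinearMap.finrank_range_add_finrank_ker (evL N S')
    rw [LinearMap.range_eq_top.2 hsurj, finrank_top, finrank_V] at h5
    rw [← h5]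
    congr 1
    rw [Module.finrank_fintype_fun_eq_card, Fintype.card_coe, hS'card]
  have e5 : Td N + Td j = Td (m+j) + Td (n+j) + j := by
    rw [hN, hj]; exact Td_id m n j
  omega

lemma eq_C_of_td0 {p : R2} (h : p.totalDegree = 0) : p = C (coeff 0 p) := by
  have h1 := (totalDegree_eq_zero_iff (Fin 2) p).1 h
  apply MvPolynomial.ext
  intro d
  rw [coeff_C]
  split_ifs with hd
  · rw [← hd]
  · by_contra hc
    apply hd
    have hmem : d ∈ p.support := mem_support_iff.2 hc
    exact (Finsupp.ext fun x => h1 d hmem x).symm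

/-- Bivariate Bézout theorem over `ℝ`: if `f` and `g` vanish simultaneously at more than
`deg f · deg g` points of `ℝ²`, then they have a common non-constant factor. -/
theorem bezout_bivariate (f g : MvPolynomial (Fin 2) ℝ)
    (S : Finset (ℝ × ℝ))
    (hS : f.totalDegree * g.totalDegree < S.card)
    (hzero : ∀ p ∈ S, eval ![p.1, p.2] f = 0 ∧ eval ![p.1, p.2] g = 0) :
    ∃ w : MvPolynomial (Fin 2) ℝ, 0 < w.totalDegree ∧ w ∣ f ∧ w ∣ g := by
  by_contra hw
  push_neg at hw
  -- S is nonempty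
  have hSne : S.Nonempty := Finset.card_pos.1 (by omega)
  -- every nonzero polynomial vanishing on a point of S is nonconstant; key facts
  have hnonzero : ∀ h : MvPolynomial (Fin 2) ℝ,
      (∀ p ∈ S, eval ![p.1, p.2] h = 0) → h ≠ 0 → h.totalDegree ≠ 0 := by
    intro h hvan hne htd
    obtain ⟨p, hp⟩ := hSne
    have := hvan p hp
    rw [eq_C_of_td0 htd] at this hne
    rw [eval_C] at this
    rw [this] at hne
    simp at hne
  have hf : f ≠ 0 := by
    rintro rfl
    rcases eq_or_ne g 0 with rfl | hg0
    · exact hw (X 0) (by rw [totalDegree_X]; omega) (dvd_zero _) (dvd_zero _)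
    · have := hnonzero g (fun p hp => (hzero p hp).2) hg0
      exact hw g (by omega) (dvd_zero _) dvd_rfl
  have hg : g ≠ 0 := by
    rintro rfl
    have := hnonzero f (fun p hp => (hzero p hp).1) hf
    exact hw f (by omega) dvd_rfl (dvd_zero _)
  have hrp : IsRelPrime f g := by
    intro z hzf hzg
    by_contra hu
    have hz0 : z ≠ 0 := by rintro rfl; exact hf (zero_dvd_iff.1 hzf)
    rcases Nat.eq_zero_or_pos z.totalDegree with htd | htd
    · apply hu
      have hcne : coeff 0 z ≠ 0 := by
        intro hc
        apply hz0
        rw [eq_C_of_td0 htd, hc, map_zero]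
      rw [eq_C_of_td0 htd]
      exact (isUnit_iff_ne_zero.2 hcne).map C
    · exact hw z htd hzf hzg
  have := key f g hf hg hrp S hzero
  omega
end

section
/- Let x₁,…,x_d be univariate real polynomials, not all constant, with xᵢ(0) = 0 for each i, and suppose that Σᵢ (xᵢ(t) − xᵢ(s))² = h(φ(t)·ψ(s)) identically in t, s, for some univariate real polynomials h, φ, ψ. Then h(φ(t)ψ(s)) is a constant independent of t and s. -/
/-- If `x₁,…,x_d` are univariate real polynomials, not all constant, with `xᵢ(0) = 0`, and
`Σᵢ (xᵢ(t) − xᵢ(s))² = h(φ(t)·ψ(s))` identically, then `h(φ(t)ψ(s))` is a constant. -/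
theorem mul_form_dist_const (d : ℕ) (x : Fin d → Polynomial ℝ)
    (hx0 : ∀ i, (x i).eval 0 = 0)
    (hnc : ∃ i, 0 < (x i).natDegree)
    (h φ ψ : Polynomial ℝ)
    (heq : ∀ t s : ℝ, ∑ i, ((x i).eval t - (x i).eval s) ^ 2 =
      h.eval (φ.eval t * ψ.eval s)) :
    ∃ c : ℝ, ∀ t s : ℝ, h.eval (φ.eval t * ψ.eval s) = c := by
  by_cases hh : h = 0
  · exact ⟨0, fun t s => by simp [hh]⟩
  have hfz : h.comp (φ * ψ) = 0 := by
    apply Polynomial.funext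
    intro t
    simp only [Polynomial.eval_comp, Polynomial.eval_mul, Polynomial.eval_zero]
    rw [← heq t t]
    simp
  rcases Polynomial.comp_eq_zero_iff.mp hfz with h0 | ⟨hroot, hconst⟩
  · exact absurd h0 hh
  · by_cases ha : (φ * ψ).coeff 0 = 0
    · have hz : φ * ψ = 0 := by rw [hconst, ha, map_zero]
      rcases mul_eq_zero.mp hz with hφ | hψ
      · exact ⟨h.eval 0, fun t s => by simp [hφ]⟩
      · exact ⟨h.eval 0, fun t s => by simp [hψ]⟩
    · have hu : IsUnit (φ * ψ) := by
        rw [hconst]; exact Polynomial.isUnit_C.mpr (isUnit_iff_ne_zero.mpr ha)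
      obtain ⟨b, -, hb⟩ := Polynomial.isUnit_iff.mp (isUnit_of_mul_isUnit_left hu)
      obtain ⟨c, -, hc⟩ := Polynomial.isUnit_iff.mp (isUnit_of_mul_isUnit_right hu)
      exact ⟨h.eval (b * c), fun t s => by rw [← hb, ← hc]; simp⟩
end

section
/- Let x₁,…,x_d be univariate real polynomials with xᵢ(0) = 0 for each i, and let φ be a univariate real polynomial with φ(0) = 0, such that Σᵢ₌₁^d (xᵢ(t) − xᵢ(s))² = (φ(t) − φ(s))² identically in t, s. Then the vectors (x₁(t),…,x_d(t)) and (x₁(s),…,x_d(s)) are parallel for all t, s ∈ ℝ; equivalently, the curve γ(t) = (x₁(t),…,x_d(t)) is contained in a line through the origin. -/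
/-- If `xᵢ(0) = 0`, `φ(0) = 0`, and `Σᵢ (xᵢ(t) − xᵢ(s))² = (φ(t) − φ(s))²` identically, then
for all `t, s` the vectors `(x₁(t),…,x_d(t))` and `(x₁(s),…,x_d(s))` are parallel (linearly
dependent), i.e. the curve `γ(t) = (x₁(t),…,x_d(t))` lies on a line through the origin. -/
theorem sq_dist_eq_sq_diff_imp_line (d : ℕ) (x : Fin d → Polynomial ℝ)
    (φ : Polynomial ℝ)
    (hx0 : ∀ i, (x i).eval 0 = 0) (hφ0 : φ.eval 0 = 0)
    (heq : ∀ t s : ℝ, ∑ i, ((x i).eval t - (x i).eval s) ^ 2 =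
      (φ.eval t - φ.eval s) ^ 2) :
    ∀ t s : ℝ, ∃ a b : ℝ, (a, b) ≠ (0, 0) ∧
      ∀ i, a * (x i).eval t + b * (x i).eval s = 0 := by
  intro t s
  set u : Fin d → ℝ := fun i => (x i).eval t with hu
  set v : Fin d → ℝ := fun i => (x i).eval s with hv
  set A : ℝ := φ.eval t with hA
  set B : ℝ := φ.eval s with hB
  have hnorm : ∀ r : ℝ, ∑ i, ((x i).eval r) ^ 2 = (φ.eval r) ^ 2 := by
    intro r
    have := heq r 0
    simpa [hx0, hφ0] using this
  have hut : ∑ i, u i ^ 2 = A ^ 2 := hnorm t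
  have hvs : ∑ i, v i ^ 2 = B ^ 2 := hnorm s
  have hinner : ∑ i, u i * v i = A * B := by
    have h := heq t s
    have hexp : ∑ i, (u i - v i) ^ 2 =
        (∑ i, u i ^ 2) + (∑ i, v i ^ 2) - 2 * ∑ i, u i * v i := by
      rw [Finset.mul_sum, ← Finset.sum_add_distrib, ← Finset.sum_sub_distrib]
      exact Finset.sum_congr rfl fun i _ => by ring
    rw [hexp, hut, hvs] at h
    nlinarith [h]
  by_cases hA0 : A = 0
  · refine ⟨1, 0, by simp, fun i => ?_⟩
    have hz : ∑ i, u i ^ 2 = 0 := by rw [hut, hA0]; ring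
    have : u i ^ 2 = 0 := by
      have := Finset.sum_eq_zero_iff_of_nonneg (fun j _ => sq_nonneg (u j)) |>.mp hz
        i (Finset.mem_univ i)
      exact this
    have : u i = 0 := by nlinarith [this]
    simp [hu] at this
    simp [this]
  · refine ⟨B, -A, by simp [hA0], fun i => ?_⟩
    have hz : ∑ i, (B * u i - A * v i) ^ 2 = 0 := by
      have hexp : ∑ i, (B * u i - A * v i) ^ 2 =
          B ^ 2 * (∑ i, u i ^ 2) - 2 * (A * B) * (∑ i, u i * v i)
            + A ^ 2 * (∑ i, v i ^ 2) := by
        rw [Finset.mul_sum, Finset.mul_sum, Finset.mul_sum, ← Finset.sum_sub_distrib,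
          ← Finset.sum_add_distrib]
        exact Finset.sum_congr rfl fun i _ => by ring
      rw [hexp, hut, hvs, hinner]
      ring
    have hzi : (B * u i - A * v i) ^ 2 = 0 :=
      Finset.sum_eq_zero_iff_of_nonneg (fun j _ => sq_nonneg _) |>.mp hz i
        (Finset.mem_univ i)
    have : B * u i - A * v i = 0 := by nlinarith [hzi]
    have : B * u i + (-A) * v i = 0 := by linarith
    simpa [hu, hv] using this
end

section
/- Let x₁,…,x_d and φ, ψ, h be univariate real polynomials such that Σᵢ₌₁^d (xᵢ(t) − xᵢ(s))² = h(φ(t) + ψ(s)) identically in t, s, where the left-hand side is not identically zero. Then there is a real root x₀ of h with φ(t) + ψ(t) ≡ x₀, i.e., ψ(t) = x₀ − φ(t) for all t, and x₀ is a root of h of multiplicity at least 2. -/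
open Polynomial

/-- A real polynomial vanishing at every real number is zero. -/
lemma poly_eq_zero_of_eval_zero (p : Polynomial ℝ) (hp : ∀ t : ℝ, p.eval t = 0) : p = 0 :=
  Polynomial.funext fun t => by simp [hp t]

/-- If `Σᵢ (xᵢ(t) − xᵢ(s))² = h(φ(t) + ψ(s))` identically, with the left side not identically
zero, then there is a real root `x₀` of `h` with `φ(t) + ψ(t) ≡ x₀`, and `x₀` is a root of `h`
of multiplicity at least 2. -/
theorem add_form_root_multiplicity (d : ℕ) (x : Fin d → Polynomial ℝ)
    (h φ ψ : Polynomial ℝ)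
    (heq : ∀ t s : ℝ, ∑ i, ((x i).eval t - (x i).eval s) ^ 2 =
      h.eval (φ.eval t + ψ.eval s))
    (hnz : ∃ t s : ℝ, ∑ i, ((x i).eval t - (x i).eval s) ^ 2 ≠ 0) :
    ∃ x₀ : ℝ, h.IsRoot x₀ ∧ (∀ t : ℝ, φ.eval t + ψ.eval t = x₀) ∧
      2 ≤ h.rootMultiplicity x₀ := by
  -- h ≠ 0
  have hh0 : h ≠ 0 := by
    rintro rfl
    obtain ⟨t, s, hts⟩ := hnz
    exact hts (by simpa using heq t s)
  -- h.comp (φ + ψ) = 0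
  have hcomp : h.comp (φ + ψ) = 0 := by
    apply poly_eq_zero_of_eval_zero
    intro t
    have := (heq t t).symm
    simpa [eval_comp, sub_self] using this
  rw [comp_eq_zero_iff] at hcomp
  rcases hcomp with hcomp | ⟨hroot, hconst⟩
  · exact absurd hcomp hh0
  set x₀ := (φ + ψ).coeff 0 with hx₀
  have hsum : ∀ t : ℝ, φ.eval t + ψ.eval t = x₀ := by
    intro t
    have := congrArg (Polynomial.eval t) hconst
    simpa [eval_add] using this
  refine ⟨x₀, hroot, hsum, ?_⟩
  -- derivative condition: h'(x₀) = 0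
  have hderiv : (derivative h).IsRoot x₀ := by
    by_contra hd
    -- For each fixed s, the polynomial in t vanishes identically, so its derivative at t = s is 0.
    have key : ∀ s : ℝ, (derivative h).eval x₀ * (derivative φ).eval s = 0 := by
      intro s
      set P : Polynomial ℝ := (∑ i, (x i - C ((x i).eval s)) ^ 2) -
        h.comp (φ + C (ψ.eval s)) with hP
      have hP0 : P = 0 := by
        apply poly_eq_zero_of_eval_zero
        intro t
        simp [hP, eval_finset_sum, eval_comp, heq t s]
      have hdP : (derivative P).eval s = 0 := by rw [hP0]; simp
      simp only [hP] at hdP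
      simp [derivative_sum, derivative_pow, derivative_comp, eval_finset_sum, eval_comp] at hdP
      rw [hsum s] at hdP
      rcases hdP with h' | h' <;> simp [h']
    have keyψ : ∀ t : ℝ, (derivative h).eval x₀ * (derivative ψ).eval t = 0 := by
      intro t
      set P : Polynomial ℝ := (∑ i, (C ((x i).eval t) - x i) ^ 2) -
        h.comp (C (φ.eval t) + ψ) with hP
      have hP0 : P = 0 := by
        apply poly_eq_zero_of_eval_zero
        intro s
        simp [hP, eval_finset_sum, eval_comp, heq t s]
      have hdP : (derivative P).eval t = 0 := by rw [hP0]; simp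
      simp only [hP] at hdP
      simp [derivative_sum, derivative_pow, derivative_comp, eval_finset_sum, eval_comp] at hdP
      rw [hsum t] at hdP
      rcases hdP with h' | h' <;> simp [h']
    -- hence φ' = 0 and ψ' = 0
    have hφ' : derivative φ = 0 := by
      apply poly_eq_zero_of_eval_zero
      intro s
      rcases mul_eq_zero.mp (key s) with h' | h'
      · exact absurd h' hd
      · exact h'
    have hψ' : derivative ψ = 0 := by
      apply poly_eq_zero_of_eval_zero
      intro t
      rcases mul_eq_zero.mp (keyψ t) with h' | h'
      · exact absurd h' hd
      · exact h'
    -- so φ, ψ are constants and the LHS is identically 0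
    have hφc : φ.natDegree = 0 := natDegree_eq_zero_of_derivative_eq_zero hφ'
    have hψc : ψ.natDegree = 0 := natDegree_eq_zero_of_derivative_eq_zero hψ'
    obtain ⟨t, s, hts⟩ := hnz
    apply hts
    rw [heq t s]
    have hψeq : ψ.eval s = ψ.eval t := by
      rw [eq_C_of_natDegree_eq_zero hψc]; simp
    rw [hψeq, hsum t]
    exact hroot
  have := (one_lt_rootMultiplicity_iff_isRoot hh0).2 ⟨hroot, hderiv⟩
  omega
end
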